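/- arXiv:1707.03194 — 7 statements merged into one kernel-verified Lean document; each statement's English description precedes it below -/
import Mathlib

section
/- Let 𝒮 be a stratification of a set D ⊆ ℝ^N and let x ∈ D. Then there exists δ > 0 such that the following three collections of strata coincide: (a) the collection {M_{x'} : x' ∈ D, ‖x' − x‖ < δ} of strata containing points of D within distance δ of x; (b) the collection of strata M ∈ 𝒮 with M ≥ M_x; (c) the collection of strata of 𝒮 that are active at x. -/
open Filter Topology Set Pointwise

noncomputable section

variable {E : Type*} [NormedAddCommGroup E] [InnerProductSpace ℝ E]

/-- The convex subdifferential of an `EReal`-valued function. -/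
def subdiff (R : E → EReal) (x : E) : Set E :=
  {u | ∀ y, R x + ((inner ℝ u (y - x) : ℝ) : EReal) ≤ R y}

/-- The Legendre–Fenchel conjugate. -/
def fenchel (R : E → EReal) (u : E) : EReal :=
  ⨆ x, ((inner ℝ u x : ℝ) : EReal) - R x

/-- Domain of the subdifferential. -/
def domSubdiff (R : E → EReal) : Set E := {x | (subdiff R x).Nonempty}

/-- A proper extended-real-valued function. -/
def ProperFn (R : E → EReal) : Prop := (∀ x, R x ≠ ⊥) ∧ ∃ x, R x ≠ ⊤

/-- Convexity of an extended-real-valued function, via its epigraph. -/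
def ConvexFn (R : E → EReal) : Prop :=
  Convex ℝ {p : E × ℝ | R p.1 ≤ (p.2 : EReal)}

/-- Proper, convex and lower semicontinuous. -/
def ProperConvexLsc (R : E → EReal) : Prop :=
  ProperFn R ∧ ConvexFn R ∧ LowerSemicontinuous R

/-- The correspondence operator `𝒥_R`. -/
def corrOp (R : E → EReal) (S : Set E) : Set E :=
  ⋃ x ∈ S, intrinsicInterior ℝ (subdiff R x)

/-- The partial order on strata: `M ≤ M' ⟺ M ⊆ cl M'`. -/
def stratLE (M M' : Set E) : Prop := M ⊆ closure M'

/-- A stratification of `D`: a finite partition into nonempty strata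
satisfying the frontier condition. -/
structure IsStratification (D : Set E) (S : Set (Set E)) : Prop where
  finite : S.Finite
  nonempty : ∀ M ∈ S, M.Nonempty
  cover : ⋃₀ S = D
  pairwiseDisjoint : ∀ M ∈ S, ∀ M' ∈ S, M ≠ M' → Disjoint M M'
  frontier_cond : ∀ M ∈ S, ∀ M' ∈ S, (M ∩ closure M').Nonempty → M ⊆ closure M'

/-- `R` is mirror-stratifiable with respect to a primal stratification `S` of
`dom ∂R` and a dual stratification `Sd` of `dom ∂R*`. -/
structure IsMirrorStratifiable (R : E → EReal) (S Sd : Set (Set E)) : Prop where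
  primal : IsStratification (domSubdiff R) S
  dual : IsStratification (domSubdiff (fenchel R)) Sd
  maps_primal : ∀ M ∈ S, corrOp R M ∈ Sd
  maps_dual : ∀ Md ∈ Sd, corrOp (fenchel R) Md ∈ S
  pairing : ∀ M ∈ S, ∀ Md ∈ Sd, (corrOp R M = Md ↔ corrOp (fenchel R) Md = M)
  decreasing : ∀ M ∈ S, ∀ M' ∈ S, (stratLE M M' ↔ stratLE (corrOp R M') (corrOp R M))


/-- Proposition 2.1: given a stratification `S` of `D` and `x ∈ D`,
there is `δ > 0` such that the strata met by points of `D` at distance `< δ` from `x`,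
the strata `M ≥ M_x`, and the strata active at `x`, all coincide. -/
theorem strata_active_characterization
    {N : ℕ} (D : Set (EuclideanSpace ℝ (Fin N)))
    (S : Set (Set (EuclideanSpace ℝ (Fin N))))
    (hS : IsStratification D S)
    (x : EuclideanSpace ℝ (Fin N)) (hxD : x ∈ D)
    (Mx : Set (EuclideanSpace ℝ (Fin N))) (hMx : Mx ∈ S) (hxMx : x ∈ Mx) :
    ∃ δ > (0:ℝ), ∀ M ∈ S,
      ((∃ x' ∈ D, dist x' x < δ ∧ x' ∈ M) ↔ stratLE Mx M) ∧
      ((∃ x' ∈ D, dist x' x < δ ∧ x' ∈ M) ↔ x ∈ closure M) := by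
  classical
  have key : ∀ M : Set (EuclideanSpace ℝ (Fin N)),
      ∃ ε > (0:ℝ), x ∉ closure M → ∀ y ∈ Metric.ball x ε, y ∉ M := by
    intro M
    by_cases h : x ∈ closure M
    · exact ⟨1, one_pos, fun hc => absurd h hc⟩
    · obtain ⟨ε, hε, hsub⟩ :=
        Metric.isOpen_iff.mp (isOpen_compl_iff.mpr isClosed_closure) x h
      exact ⟨ε, hε, fun _ y hy hyM => hsub hy (subset_closure hyM)⟩
  choose f hfpos hf using key
  have hF : Mx ∈ hS.finite.toFinset := hS.finite.mem_toFinset.mpr hMx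
  set F := hS.finite.toFinset with hFdef
  have hFne : F.Nonempty := ⟨Mx, hF⟩
  set δ := F.inf' hFne f with hδdef
  have hδpos : 0 < δ := by
    rw [hδdef, Finset.lt_inf'_iff]
    intro M _
    exact hfpos M
  have hδle : ∀ M ∈ S, δ ≤ f M := fun M hM =>
    Finset.inf'_le f (hS.finite.mem_toFinset.mpr hM)
  refine ⟨δ, hδpos, fun M hM => ?_⟩
  have hMD : M ⊆ D := by
    rw [← hS.cover]; exact fun y hy => ⟨M, hM, hy⟩
  have hac : (∃ x' ∈ D, dist x' x < δ ∧ x' ∈ M) → x ∈ closure M := by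
    rintro ⟨x', _, hdist, hx'M⟩
    by_contra h
    exact hf M h x' (Metric.mem_ball.mpr (lt_of_lt_of_le hdist (hδle M hM))) hx'M
  have hcb : x ∈ closure M → stratLE Mx M := fun h =>
    hS.frontier_cond Mx hMx M hM ⟨x, hxMx, h⟩
  have hbc : stratLE Mx M → x ∈ closure M := fun h => h hxMx
  have hca : x ∈ closure M → (∃ x' ∈ D, dist x' x < δ ∧ x' ∈ M) := by
    intro h
    obtain ⟨y, hyM, hyd⟩ := Metric.mem_closure_iff.mp h δ hδpos
    exact ⟨y, hMD hyM, by rwa [dist_comm], hyM⟩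
  exact ⟨⟨fun h => hcb (hac h), fun h => hca (hbc h)⟩, ⟨hac, hca⟩⟩

end
end

section
/- Let R: ℝ^N → ℝ ∪ {+∞} be a proper lower semicontinuous convex function that is mirror-stratifiable with respect to primal–dual stratifications (𝒮, 𝒮*). Let (x̄, ū) ∈ ℝ^N × ℝ^N and let (x_k, u_k) be a sequence converging to (x̄, ū) with u_k ∈ ∂R(x_k) for every k. Then for all k sufficiently large, M_{x̄} ≤ M_{x_k} ≤ 𝒥_{R*}(M*_{ū}), where M_{x̄}, M_{x_k} ∈ 𝒮 are the strata containing x̄ and x_k, and M*_{ū} ∈ 𝒮* is the stratum containing ū. -/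
open Filter Topology Set Pointwise

noncomputable section

variable {E : Type*} [NormedAddCommGroup E] [InnerProductSpace ℝ E]

/-- A convex set is contained in the closure of its interior, provided the interior
is nonempty. -/
lemma aux_subset_closure_interior {V : Type*} [NormedAddCommGroup V] [NormedSpace ℝ V]
    {t : Set V} (ht : Convex ℝ t) (hne : (interior t).Nonempty) :
    t ⊆ closure (interior t) := by
  obtain ⟨y, hy⟩ := hne
  intro w hw
  have hcont : Tendsto (fun r : ℝ => (1 - r) • w + r • y) (𝓝[>] 0) (𝓝 w) := by
    have h : Continuous (fun r : ℝ => (1 - r) • w + r • y) := by continuity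
    have h2 : Tendsto (fun r : ℝ => (1 - r) • w + r • y) (𝓝[>] (0:ℝ)) (𝓝 (((1:ℝ) - 0) • w + (0:ℝ) • y)) :=
      (h.tendsto 0).mono_left nhdsWithin_le_nhds
    simpa using h2
  refine mem_closure_of_tendsto hcont ?_
  filter_upwards [Ioo_mem_nhdsGT_of_mem (Set.left_mem_Ico.mpr zero_lt_one)] with r hr
  exact ht.combo_closure_interior_mem_interior (subset_closure hw) hy
    (by linarith [hr.2]) hr.1 (by ring)

/-- A nonempty convex set in a finite-dimensional space is contained in the closure of its
intrinsic interior. -/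
lemma aux_subset_closure_intrinsicInterior {V : Type*} [NormedAddCommGroup V]
    [NormedSpace ℝ V] [FiniteDimensional ℝ V] {s : Set V} (hs : Convex ℝ s)
    (hne : s.Nonempty) : s ⊆ closure (intrinsicInterior ℝ s) := by
  obtain ⟨p, hp⟩ := hne
  set A := affineSpan ℝ s with hA
  haveI : Nonempty A := ⟨⟨p, subset_affineSpan ℝ s hp⟩⟩
  let p' : A := ⟨p, subset_affineSpan ℝ s hp⟩
  let φ := (AffineIsometryEquiv.constVSub ℝ p').symm
  let ψ := φ.toHomeomorph
  set s' : Set A := ((↑) ⁻¹' s) with hs'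
  set t : Set A.direction := ψ ⁻¹' s' with htdef
  have htconv : Convex ℝ t := by
    have h := hs.affine_preimage (A.subtype.comp φ.toAffineEquiv.toAffineMap)
    have heq : t = (A.subtype.comp φ.toAffineEquiv.toAffineMap) ⁻¹' s := by
      ext v; simp [htdef, hs', ψ, φ]
    rwa [heq]
  have hintne : (interior s').Nonempty := by
    obtain ⟨z, hz⟩ := Set.Nonempty.intrinsicInterior hs ⟨p, hp⟩
    rw [intrinsicInterior] at hz
    obtain ⟨z', hz', rfl⟩ := hz
    exact ⟨z', hz'⟩
  have hintt : interior t = ψ ⁻¹' interior s' := (ψ.preimage_interior s').symm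
  have hinttne : (interior t).Nonempty := by
    obtain ⟨z', hz'⟩ := hintne
    exact ⟨ψ.symm z', by rw [hintt]; simpa using hz'⟩
  intro w hw
  set w' : A := ⟨w, subset_affineSpan ℝ s hw⟩ with hw'def
  have hw' : w' ∈ s' := hw
  have h1 : ψ.symm w' ∈ t := by
    rw [htdef, Set.mem_preimage]
    simpa using hw'
  have h2 : ψ.symm w' ∈ closure (interior t) :=
    aux_subset_closure_interior htconv hinttne h1
  have h3 : w' ∈ closure (interior s') := by
    have : w' = ψ (ψ.symm w') := (ψ.apply_symm_apply w').symm
    rw [this]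
    have himg : ψ '' closure (interior t) = closure (ψ '' interior t) :=
      ψ.image_closure (interior t)
    have himg2 : ψ '' interior t = interior s' := by
      rw [hintt, ψ.image_preimage]
    have : ψ (ψ.symm w') ∈ ψ '' closure (interior t) :=
      Set.mem_image_of_mem ψ h2
    rwa [himg, himg2] at this
  have h4 : w ∈ (↑) '' closure (interior s') := ⟨w', h3, rfl⟩
  have h5 : ((↑) : A → V) '' closure (interior s') ⊆ closure ((↑) '' interior s') :=
    image_closure_subset_closure_image continuous_subtype_val
  exact closure_mono (by rw [intrinsicInterior]) (h5 h4)

/-- If the subdifferential at `x` is nonempty and `R` is proper, then `R x` is real. -/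
lemma aux_finite_of_subdiff {R : E → EReal} {x u : E} (hu : u ∈ subdiff R x)
    (hp : ProperFn R) : ∃ a : ℝ, R x = (a : EReal) := by
  have hbot : R x ≠ ⊥ := hp.1 x
  have htop : R x ≠ ⊤ := by
    intro h
    obtain ⟨y, hy⟩ := hp.2
    have := hu y
    rw [h] at this
    rw [EReal.top_add_coe] at this
    exact hy (top_le_iff.mp this)
  exact ⟨(R x).toReal, (EReal.coe_toReal htop hbot).symm⟩

/-- Convexity of the subdifferential at a point where `R` is finite. -/
lemma aux_subdiff_convex {R : E → EReal} {x : E} {a : ℝ} (hx : R x = (a : EReal))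
    (hbot : ∀ y, R y ≠ ⊥) : Convex ℝ (subdiff R x) := by
  intro u hu v hv c d hc hd hcd
  intro y
  rw [hx]
  by_cases hy : R y = ⊤
  · rw [hy]; exact le_top
  · obtain ⟨b, hb⟩ : ∃ b : ℝ, R y = (b : EReal) :=
      ⟨(R y).toReal, (EReal.coe_toReal hy (hbot y)).symm⟩
    have hu' := hu y
    have hv' := hv y
    rw [hx, hb] at hu' hv'
    rw [hb]
    have hu'' : a + (inner ℝ u (y - x) : ℝ) ≤ b := by
      have := hu'
      rw [← EReal.coe_add] at this
      exact_mod_cast this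
    have hv'' : a + (inner ℝ v (y - x) : ℝ) ≤ b := by
      have := hv'
      rw [← EReal.coe_add] at this
      exact_mod_cast this
    have hinner : (inner ℝ (c • u + d • v) (y - x) : ℝ) =
        c * (inner ℝ u (y - x) : ℝ) + d * (inner ℝ v (y - x) : ℝ) := by
      rw [inner_add_left, real_inner_smul_left, real_inner_smul_left]
    have : a + (inner ℝ (c • u + d • v) (y - x) : ℝ) ≤ b := by
      rw [hinner]
      have e1 : c * (a + (inner ℝ u (y - x) : ℝ)) ≤ c * b := mul_le_mul_of_nonneg_left hu'' hc
      have e2 : d * (a + (inner ℝ v (y - x) : ℝ)) ≤ d * b := mul_le_mul_of_nonneg_left hv'' hd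
      have hca : c * a + d * a = a := by rw [← add_mul, hcd, one_mul]
      have hcb : c * b + d * b = b := by rw [← add_mul, hcd, one_mul]
      ring_nf at e1 e2 ⊢
      nlinarith [e1, e2, hca, hcb]
    rw [← EReal.coe_add]
    exact_mod_cast this

/-- Theorem 2.10, enlarged activity identification: if `R` is proper
lsc convex and mirror-stratifiable w.r.t. `(S, Sd)`, and `(x_k, u_k) → (x̄, ū)` with
`u_k ∈ ∂R(x_k)`, then for all large `k` the stratum of `x_k` satisfies
`M_{x̄} ≤ M_{x_k} ≤ 𝒥_{R*}(M*_{ū})`. -/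
theorem enlarged_activity_identification
    {N : ℕ} (R : EuclideanSpace ℝ (Fin N) → EReal)
    (hR : ProperConvexLsc R)
    (S Sd : Set (Set (EuclideanSpace ℝ (Fin N))))
    (hms : IsMirrorStratifiable R S Sd)
    (xbar ubar : EuclideanSpace ℝ (Fin N))
    (x u : ℕ → EuclideanSpace ℝ (Fin N))
    (hx : Tendsto x atTop (𝓝 xbar)) (hu : Tendsto u atTop (𝓝 ubar))
    (hsub : ∀ k, u k ∈ subdiff R (x k))
    (Mxbar : Set (EuclideanSpace ℝ (Fin N))) (hMxbar : Mxbar ∈ S) (hxbar : xbar ∈ Mxbar)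
    (Mubar : Set (EuclideanSpace ℝ (Fin N))) (hMubar : Mubar ∈ Sd) (hubar : ubar ∈ Mubar) :
    ∀ᶠ k in atTop, ∀ Mk ∈ S, x k ∈ Mk →
      stratLE Mxbar Mk ∧ stratLE Mk (corrOp (fenchel R) Mubar) := by
  obtain ⟨hproper, hconv, hlsc⟩ := hR
  set T := corrOp (fenchel R) Mubar with hT
  have hTS : T ∈ S := hms.maps_dual Mubar hMubar
  have hpair : corrOp R T = Mubar := (hms.pairing T hTS Mubar hMubar).mpr rfl
  have key : ∀ M ∈ S, (¬ stratLE Mxbar M ∨ ¬ stratLE M T) → ∀ᶠ k in atTop, x k ∉ M := by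
    intro M hM hbad
    rcases hbad with h1 | h2
    · -- primal: x̄ is not in the closure of M
      have hxcl : xbar ∉ closure M := fun hc =>
        h1 (hms.primal.frontier_cond Mxbar hMxbar M hM ⟨xbar, hxbar, hc⟩)
      have hopen : IsOpen (closure M)ᶜ := isClosed_closure.isOpen_compl
      have hev : ∀ᶠ k in atTop, x k ∈ (closure M)ᶜ :=
        hx.eventually (hopen.eventually_mem hxcl)
      filter_upwards [hev] with k hk hxkM
      exact hk (subset_closure hxkM)
    · -- dual: ū is not in the closure of corrOp R M
      have hMd : corrOp R M ∈ Sd := hms.maps_primal M hM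
      have h3 : ¬ stratLE Mubar (corrOp R M) := by
        intro h
        apply h2
        rw [hT]
        exact (hms.decreasing M hM T hTS).mpr (by rwa [hpair])
      have hucl : ubar ∉ closure (corrOp R M) := fun hc =>
        h3 (hms.dual.frontier_cond Mubar hMubar _ hMd ⟨ubar, hubar, hc⟩)
      have himp : ∀ k, x k ∈ M → u k ∈ closure (corrOp R M) := by
        intro k hk
        obtain ⟨a, ha⟩ := aux_finite_of_subdiff (hsub k) hproper
        have hconvsub : Convex ℝ (subdiff R (x k)) := aux_subdiff_convex ha hproper.1
        have hsubset : subdiff R (x k) ⊆ closure (intrinsicInterior ℝ (subdiff R (x k))) :=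
          aux_subset_closure_intrinsicInterior hconvsub ⟨u k, hsub k⟩
        have hsub2 : intrinsicInterior ℝ (subdiff R (x k)) ⊆ corrOp R M := by
          intro z hz; exact Set.mem_biUnion hk hz
        exact closure_mono hsub2 (hsubset (hsub k))
      have hopen : IsOpen (closure (corrOp R M))ᶜ := isClosed_closure.isOpen_compl
      have hev : ∀ᶠ k in atTop, u k ∈ (closure (corrOp R M))ᶜ :=
        hu.eventually (hopen.eventually_mem hucl)
      filter_upwards [hev] with k hk hxkM
      exact hk (himp k hxkM)
  have hall : ∀ᶠ k in atTop, ∀ M ∈ S,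
      (¬ stratLE Mxbar M ∨ ¬ stratLE M T) → x k ∉ M := by
    rw [hms.primal.finite.eventually_all]
    intro M hM
    by_cases hbad : ¬ stratLE Mxbar M ∨ ¬ stratLE M T
    · filter_upwards [key M hM hbad] with k hk _
      exact hk
    · filter_upwards with k hk
      exact absurd hk hbad
  filter_upwards [hall] with k hk Mk hMk hxk
  constructor
  · by_contra h1
    exact hk Mk hMk (Or.inl h1) hxk
  · by_contra h2
    exact hk Mk hMk (Or.inr h2) hxk

end
end

section
/- For each m = 1, …, L, let R_m: ℝ^{N_m} → ℝ ∪ {+∞} be a proper lower semicontinuous convex function that is mirror-stratifiable with respect to stratifications (𝒮_m, 𝒮*_m). Then the separable function R: ℝ^{N_1} × ⋯ × ℝ^{N_L} → ℝ ∪ {+∞} defined by R(x_1, …, x_L) = Σ_{m=1}^L R_m(x_m) is mirror-stratifiable with respect to the product stratifications 𝒮_1 × ⋯ × 𝒮_L (whose strata are products M_1 × ⋯ × M_L with M_m ∈ 𝒮_m) and 𝒮*_1 × ⋯ × 𝒮*_L. -/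
open Filter Topology Set Pointwise

noncomputable section

variable {E : Type*} [NormedAddCommGroup E] [InnerProductSpace ℝ E]

/-! ### Auxiliary lemmas -/

section ERealLemmas

lemma ereal_sum_ne_bot {ι : Type*} [DecidableEq ι] (s : Finset ι) (a : ι → EReal)
    (h : ∀ i ∈ s, a i ≠ ⊥) : ∑ i ∈ s, a i ≠ ⊥ := by
  induction s using Finset.induction with
  | empty => simp
  | @insert j t hnot ih =>
    rw [Finset.sum_insert hnot]
    intro hc
    rcases EReal.add_eq_bot_iff.1 hc with h1 | h1
    · exact h j (Finset.mem_insert_self j t) h1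
    · exact ih (fun i hi => h i (Finset.mem_insert_of_mem hi)) h1

lemma ereal_sum_coe {ι : Type*} [DecidableEq ι] (s : Finset ι) (b : ι → ℝ) :
    ∑ i ∈ s, ((b i : EReal)) = ((∑ i ∈ s, b i : ℝ) : EReal) := by
  induction s using Finset.induction with
  | empty => simp
  | @insert j t hnot ih => rw [Finset.sum_insert hnot, Finset.sum_insert hnot, EReal.coe_add, ih]

lemma ereal_sum_eq_top {ι : Type*} [DecidableEq ι] (s : Finset ι) (a : ι → EReal)
    (h : ∀ i ∈ s, a i ≠ ⊥) {i0 : ι} (hi0 : i0 ∈ s) (h0 : a i0 = ⊤) : ∑ i ∈ s, a i = ⊤ := by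
  rw [← Finset.add_sum_erase s a hi0, h0]
  exact EReal.top_add_of_ne_bot (ereal_sum_ne_bot _ _ fun i hi => h i (Finset.mem_of_mem_erase hi))

lemma ereal_sum_eq_bot {ι : Type*} [DecidableEq ι] (s : Finset ι) (a : ι → EReal)
    {i0 : ι} (hi0 : i0 ∈ s) (h0 : a i0 = ⊥) : ∑ i ∈ s, a i = ⊥ := by
  rw [← Finset.add_sum_erase s a hi0, h0, EReal.bot_add]

lemma ereal_coe_sub_sum {ι : Type*} [DecidableEq ι] (s : Finset ι) (a : ι → EReal)
    (hbot : ∀ i ∈ s, a i ≠ ⊥) (r : ι → ℝ) :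
    ((∑ i ∈ s, r i : ℝ) : EReal) - ∑ i ∈ s, a i = ∑ i ∈ s, (((r i : ℝ) : EReal) - a i) := by
  by_cases htop : ∃ i ∈ s, a i = ⊤
  · obtain ⟨i0, hi0, h0⟩ := htop
    rw [ereal_sum_eq_top s a hbot hi0 h0]
    rw [ereal_sum_eq_bot s _ hi0 (by rw [h0]; rfl)]
    rfl
  · push_neg at htop
    have hb : ∀ i ∈ s, a i = (((a i).toReal : ℝ) : EReal) :=
      fun i hi => (EReal.coe_toReal (htop i hi) (hbot i hi)).symm
    rw [Finset.sum_congr rfl hb, ereal_sum_coe]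
    have hb2 : ∀ i ∈ s, ((r i : ℝ) : EReal) - a i = (((r i - (a i).toReal : ℝ)) : EReal) := by
      intro i hi
      rw [hb i hi]
      norm_cast
    rw [Finset.sum_congr rfl hb2, ereal_sum_coe]
    norm_cast
    rw [Finset.sum_sub_distrib]

lemma ereal_iSup_add_iSup_le {α β : Type*} (f : α → EReal) (g : β → EReal) (c : EReal)
    (h : ∀ a b, f a + g b ≤ c) : (⨆ a, f a) + (⨆ b, g b) ≤ c := by
  refine EReal.add_le_of_forall_lt fun a' ha' b' hb' => ?_
  obtain ⟨a, ha⟩ := lt_iSup_iff.1 ha'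
  obtain ⟨b, hb⟩ := lt_iSup_iff.1 hb'
  exact le_trans (add_le_add ha.le hb.le) (h a b)

lemma ereal_iSup_sum {L : ℕ} {X : Fin L → Type*} [∀ m, Nonempty (X m)]
    (g : ∀ m, X m → EReal) (s : Finset (Fin L)) :
    (⨆ x : ∀ m, X m, ∑ m ∈ s, g m (x m)) = ∑ m ∈ s, ⨆ y, g m y := by
  apply le_antisymm
  · exact iSup_le fun x => Finset.sum_le_sum fun m _ => le_iSup (g m) (x m)
  · induction s using Finset.induction with
    | empty => simp
    | @insert j t hnot ih =>
      rw [Finset.sum_insert hnot]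
      have key : ∀ (y : X j) (x : ∀ m, X m),
          g j y + ∑ m ∈ t, g m (x m) ≤ ⨆ x : ∀ m, X m, ∑ m ∈ insert j t, g m (x m) := by
        intro y x
        refine le_trans (le_of_eq ?_) (le_iSup _ (Function.update x j y))
        rw [Finset.sum_insert hnot, Function.update_self]
        congr 1
        exact Finset.sum_congr rfl fun m hm =>
          by rw [Function.update_of_ne (by rintro rfl; exact hnot hm)]
      calc (⨆ y, g j y) + ∑ m ∈ t, ⨆ y, g m y
          ≤ (⨆ y, g j y) + ⨆ x : ∀ m, X m, ∑ m ∈ t, g m (x m) := add_le_add le_rfl ih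
        _ ≤ _ := ereal_iSup_add_iSup_le _ _ _ key

end ERealLemmas

section ProperLemmas

lemma fenchel_ne_bot {R : E → EReal} (hR : ProperFn R) (u : E) : fenchel R u ≠ ⊥ := by
  obtain ⟨x, hx⟩ := hR.2
  have hxb := hR.1 x
  have h1 : ((inner ℝ u x : ℝ) : EReal) - R x = (((inner ℝ u x : ℝ) - (R x).toReal : ℝ) : EReal) := by
    rw [← EReal.coe_toReal hx hxb]
    norm_cast
  have h2 : (((inner ℝ u x : ℝ) - (R x).toReal : ℝ) : EReal) ≤ fenchel R u := by
    rw [← h1]; exact le_iSup (fun x => ((inner ℝ u x : ℝ) : EReal) - R x) x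
  intro hc
  rw [hc, le_bot_iff] at h2
  exact EReal.coe_ne_bot _ h2

lemma subdiff_value_ne_top {R : E → EReal} (hR : ProperFn R) {x u : E}
    (hu : u ∈ subdiff R x) : R x ≠ ⊤ := by
  intro htop
  obtain ⟨w, hw⟩ := hR.2
  have := hu w
  rw [htop, EReal.top_add_coe] at this
  exact hw (top_le_iff.1 this)

lemma fenchel_ne_top_of_subdiff {R : E → EReal} (hR : ProperFn R) {x u : E}
    (hu : u ∈ subdiff R x) : fenchel R u ≠ ⊤ := by
  have hxt : R x ≠ ⊤ := subdiff_value_ne_top hR hu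
  have hxb := hR.1 x
  set b : ℝ := (R x).toReal with hb
  have hRx : R x = (b : EReal) := (EReal.coe_toReal hxt hxb).symm
  have hle : fenchel R u ≤ (((inner ℝ u x : ℝ) - b : ℝ) : EReal) := by
    refine iSup_le fun y => ?_
    rcases eq_or_ne (R y) ⊤ with hy | hy
    · rw [hy]
      have : ((inner ℝ u y : ℝ) : EReal) - ⊤ = ⊥ := by
        rw [sub_eq_add_neg, EReal.neg_top, EReal.add_bot]
      rw [this]
      exact bot_le
    · have hyb := hR.1 y
      set c : ℝ := (R y).toReal with hc
      have hRy : R y = (c : EReal) := (EReal.coe_toReal hy hyb).symm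
      have h1 := hu y
      rw [hRx, hRy, inner_sub_right] at h1
      have h2 : b + ((inner ℝ u y : ℝ) - (inner ℝ u x : ℝ)) ≤ c := by
        exact_mod_cast h1
      rw [hRy]
      have : (inner ℝ u y : ℝ) - c ≤ (inner ℝ u x : ℝ) - b := by linarith
      exact_mod_cast this
  intro hc
  rw [hc] at hle
  exact EReal.coe_ne_top _ (top_le_iff.1 hle)

lemma domSubdiff_univ_of_top {R : E → EReal} (hR : ∀ x, R x = ⊤) (u : E) :
    u ∈ domSubdiff R := by
  refine ⟨0, fun y => ?_⟩
  rw [hR u, hR y, inner_zero_left]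
  rw [show ((0 : ℝ) : EReal) = (0 : EReal) from rfl, add_zero]

lemma fenchel_proper {R : E → EReal} (hR : ProperFn R) {S Sd : Set (Set E)}
    (hms : IsMirrorStratifiable R S Sd) : ProperFn (fenchel R) := by
  refine ⟨fenchel_ne_bot hR, ?_⟩
  by_cases h : ∃ x, (subdiff R x).Nonempty
  · obtain ⟨x, u, hu⟩ := h
    exact ⟨u, fenchel_ne_top_of_subdiff hR hu⟩
  · have hS : S = ∅ := by
      rw [eq_empty_iff_forall_notMem]
      intro M hM
      obtain ⟨x, hx⟩ := hms.primal.nonempty M hM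
      have hx2 : x ∈ ⋃₀ S := ⟨M, hM, hx⟩
      rw [hms.primal.cover] at hx2
      exact h ⟨x, hx2⟩
    have hSd : Sd = ∅ := by
      rw [eq_empty_iff_forall_notMem]
      intro Md hMd
      have := hms.maps_dual Md hMd
      rw [hS] at this
      exact notMem_empty _ this
    by_contra hc
    push_neg at hc
    have h0 := domSubdiff_univ_of_top hc 0
    have h1 : (0 : E) ∈ ⋃₀ Sd := by rw [hms.dual.cover]; exact h0
    rw [hSd] at h1
    simp at h1

lemma mem_intrinsicInterior_iff' {s : Set E} {x : E} :
    x ∈ intrinsicInterior ℝ s ↔ x ∈ s ∧ s ∈ 𝓝[(affineSpan ℝ s : Set E)] x := by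
  constructor
  · rintro ⟨y, hy, rfl⟩
    refine ⟨Set.mem_preimage.1 (interior_subset hy), ?_⟩
    have h1 : ((↑) ⁻¹' s : Set (affineSpan ℝ s)) ∈ 𝓝 y := mem_interior_iff_mem_nhds.1 hy
    obtain ⟨y, hy'⟩ := y
    rw [nhds_subtype_eq_comap] at h1
    obtain ⟨t, ht, hts⟩ := mem_comap.1 h1
    rw [mem_nhdsWithin_iff_exists_mem_nhds_inter]
    exact ⟨t, ht, fun z hz => hts (show (⟨z, hz.2⟩ : affineSpan ℝ s) ∈ _ from hz.1)⟩
  · rintro ⟨hxs, hnb⟩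
    have hx' : x ∈ affineSpan ℝ s := subset_affineSpan ℝ s hxs
    refine ⟨⟨x, hx'⟩, ?_, rfl⟩
    rw [mem_interior_iff_mem_nhds, nhds_subtype_eq_comap]
    obtain ⟨t, ht, hts⟩ := mem_nhdsWithin_iff_exists_mem_nhds_inter.1 hnb
    exact mem_comap.2 ⟨t, ht, fun z hz => hts ⟨hz, z.2⟩⟩

end ProperLemmas

section PiLemmas

variable {L : ℕ} {X : Fin L → Type*} [∀ m, NormedAddCommGroup (X m)]
  [∀ m, InnerProductSpace ℝ (X m)]

lemma piset_eq_pi (A : ∀ m, Set (X m)) :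
    {z : PiLp 2 X | ∀ m, z m ∈ A m} = WithLp.ofLp ⁻¹' Set.pi univ A := by
  ext z; exact ⟨fun h m _ => h m, fun h m => h m (mem_univ m)⟩

lemma piset_nonempty {A : ∀ m, Set (X m)} (h : ∀ m, (A m).Nonempty) :
    {z : PiLp 2 X | ∀ m, z m ∈ A m}.Nonempty := by
  choose a ha using h
  exact ⟨(WithLp.toLp 2 a : PiLp 2 X), ha⟩

lemma closure_piset (A : ∀ m, Set (X m)) :
    closure {z : PiLp 2 X | ∀ m, z m ∈ A m} = {z : PiLp 2 X | ∀ m, z m ∈ closure (A m)} := by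
  rw [piset_eq_pi, piset_eq_pi, ← closure_pi_set]
  exact ((PiLp.homeomorph 2 X).preimage_closure _).symm

lemma piset_eq_iff {A B : ∀ m, Set (X m)} (hA : ∀ m, (A m).Nonempty) :
    {z : PiLp 2 X | ∀ m, z m ∈ A m} = {z : PiLp 2 X | ∀ m, z m ∈ B m} ↔ ∀ m, A m = B m := by
  constructor
  · intro h m
    choose a ha using hA
    apply Subset.antisymm
    · intro v hv
      have h1 : (WithLp.toLp 2 (Function.update a m v) : PiLp 2 X) ∈ {z : PiLp 2 X | ∀ m, z m ∈ A m} := by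
        intro m'
        by_cases hm' : m' = m
        · subst hm'; rw [WithLp.ofLp_toLp, Function.update_self]; exact hv
        · rw [WithLp.ofLp_toLp, Function.update_of_ne hm']; exact ha m'
      rw [h] at h1
      have := h1 m
      rwa [WithLp.ofLp_toLp, Function.update_self] at this
    · intro v hv
      have hBA : ∀ m', a m' ∈ B m' := by
        have : (WithLp.toLp 2 a : PiLp 2 X) ∈ {z : PiLp 2 X | ∀ m, z m ∈ A m} := ha
        rw [h] at this; exact this
      have h1 : (WithLp.toLp 2 (Function.update a m v) : PiLp 2 X) ∈ {z : PiLp 2 X | ∀ m, z m ∈ B m} := by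
        intro m'
        by_cases hm' : m' = m
        · subst hm'; rw [WithLp.ofLp_toLp, Function.update_self]; exact hv
        · rw [WithLp.ofLp_toLp, Function.update_of_ne hm']; exact hBA m'
      rw [← h] at h1
      have := h1 m
      rwa [WithLp.ofLp_toLp, Function.update_self] at this
  · intro h
    have : A = B := funext h
    rw [this]

lemma piset_subset_iff {A B : ∀ m, Set (X m)} (hA : ∀ m, (A m).Nonempty) :
    {z : PiLp 2 X | ∀ m, z m ∈ A m} ⊆ {z : PiLp 2 X | ∀ m, z m ∈ B m} ↔ ∀ m, A m ⊆ B m := by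
  constructor
  · intro h m v hv
    choose a ha using hA
    have h1 : (WithLp.toLp 2 (Function.update a m v) : PiLp 2 X) ∈ {z : PiLp 2 X | ∀ m, z m ∈ A m} := by
      intro m'
      by_cases hm' : m' = m
      · subst hm'; rw [WithLp.ofLp_toLp, Function.update_self]; exact hv
      · rw [WithLp.ofLp_toLp, Function.update_of_ne hm']; exact ha m'
    have := h h1 m
    rwa [WithLp.ofLp_toLp, Function.update_self] at this
  · exact fun h z hz m => h m (hz m)

lemma piLp_apply_combo (c : ℝ) (u v w : PiLp 2 X) (m : Fin L) :
    (c • (u - v) + w) m = c • (u m - v m) + w m := rfl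

lemma affineSpan_pi (A : ∀ m, Set (X m)) (hne : ∀ m, (A m).Nonempty) :
    (affineSpan ℝ {z : PiLp 2 X | ∀ m, z m ∈ A m} : Set (PiLp 2 X))
      = {z | ∀ m, z m ∈ (affineSpan ℝ (A m) : Set (X m))} := by
  apply Subset.antisymm
  · intro z hz
    refine affineSpan_induction hz (fun p hp m => subset_affineSpan ℝ (A m) (hp m)) ?_
    intro c u v w hu hv hw m
    have : (c • (u -ᵥ v) +ᵥ w) m = c • (u m -ᵥ v m) +ᵥ w m := rfl
    rw [this]
    exact AffineSubspace.smul_vsub_vadd_mem _ c (hu m) (hv m) (hw m)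
  · intro z hz
    choose a ha using hne
    have key : ∀ s : Finset (Fin L), ∀ y : PiLp 2 X,
        (∀ m ∈ s, y m ∈ affineSpan ℝ (A m)) → (∀ m ∉ s, y m ∈ A m) →
        y ∈ affineSpan ℝ {z : PiLp 2 X | ∀ m, z m ∈ A m} := by
      intro s
      induction s using Finset.induction with
      | empty =>
        intro y _ h2
        exact subset_affineSpan ℝ _ (fun m => h2 m (Finset.notMem_empty m))
      | @insert j t hnot ih =>
        intro y h1 h2
        have hyj : y j ∈ affineSpan ℝ (A j) := h1 j (Finset.mem_insert_self j t)
        have main : ∀ w ∈ affineSpan ℝ (A j),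
            (WithLp.toLp 2 (Function.update y j w) : PiLp 2 X) ∈
              affineSpan ℝ {z : PiLp 2 X | ∀ m, z m ∈ A m} := by
          intro w hw
          refine affineSpan_induction (p := fun w => (WithLp.toLp 2 (Function.update y j w) : PiLp 2 X) ∈
              affineSpan ℝ {z : PiLp 2 X | ∀ m, z m ∈ A m}) hw ?_ ?_
          · intro p hp
            refine ih (WithLp.toLp 2 (Function.update y j p)) ?_ ?_
            · intro m hm
              have hmj : m ≠ j := by rintro rfl; exact hnot hm
              rw [WithLp.ofLp_toLp, Function.update_of_ne hmj]
              exact h1 m (Finset.mem_insert_of_mem hm)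
            · intro m hm
              by_cases hmj : m = j
              · subst hmj; rw [WithLp.ofLp_toLp, Function.update_self]; exact hp
              · rw [WithLp.ofLp_toLp, Function.update_of_ne hmj]
                exact h2 m (by simp [hmj, hm])
          · intro c p q r hp hq hr
            have heq : (WithLp.toLp 2 (Function.update y j (c • (p -ᵥ q) +ᵥ r)) : PiLp 2 X)
                = c • ((WithLp.toLp 2 (Function.update y j p) : PiLp 2 X) -ᵥ
                    (WithLp.toLp 2 (Function.update y j q) : PiLp 2 X)) +ᵥ
                    (WithLp.toLp 2 (Function.update y j r) : PiLp 2 X) := by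
              ext m
              by_cases hmj : m = j
              · subst hmj; simp [piLp_apply_combo]
              · have : ∀ (b : X j), Function.update y j b m = y m :=
                  fun b => Function.update_of_ne hmj b y
                simp only [vsub_eq_sub, vadd_eq_add, piLp_apply_combo, this]
                simp
            rw [heq]
            exact AffineSubspace.smul_vsub_vadd_mem _ c hp hq hr
        have := main (y j) hyj
        rwa [WithLp.ofLp_toLp, Function.update_eq_self, WithLp.toLp_ofLp] at this
    exact key Finset.univ z (fun m _ => hz m) (fun m hm => absurd (Finset.mem_univ m) hm)

lemma piset_nhdsWithin (A T : ∀ m, Set (X m)) (x : PiLp 2 X)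
    (hxT : ∀ m, x m ∈ T m) (hxA : ∀ m, x m ∈ A m) :
    {z : PiLp 2 X | ∀ m, z m ∈ A m} ∈ 𝓝[{z : PiLp 2 X | ∀ m, z m ∈ T m}] x ↔
      ∀ m, A m ∈ 𝓝[T m] (x m) := by
  constructor
  · intro h m
    have hgc : Continuous (fun y : X m => (WithLp.toLp 2 (Function.update x m y) : PiLp 2 X)) :=
      (PiLp.continuous_toLp 2 X).comp (continuous_const.update m continuous_id)
    have himg : (fun y : X m => (WithLp.toLp 2 (Function.update x m y) : PiLp 2 X)) '' T m
        ⊆ {z : PiLp 2 X | ∀ m, z m ∈ T m} := by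
      rintro _ ⟨y, hy, rfl⟩ m'
      by_cases hm' : m' = m
      · subst hm'
        show Function.update x m' y m' ∈ T m'
        rw [Function.update_self]; exact hy
      · show Function.update x m y m' ∈ T m'
        rw [Function.update_of_ne hm']; exact hxT m'
    have h' : {z : PiLp 2 X | ∀ m, z m ∈ A m}
        ∈ 𝓝[(fun y : X m => (WithLp.toLp 2 (Function.update x m y) : PiLp 2 X)) '' T m]
          ((fun y : X m => (WithLp.toLp 2 (Function.update x m y) : PiLp 2 X)) (x m)) := by
      have hgx : (WithLp.toLp 2 (Function.update x m (x m)) : PiLp 2 X) = x := congrArg (WithLp.toLp 2) (Function.update_eq_self m x)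
      show _ ∈ 𝓝[_] (WithLp.toLp 2 (Function.update x m (x m)) : PiLp 2 X)
      rw [hgx]
      exact nhdsWithin_mono _ himg h
    have hpre := (hgc.continuousWithinAt (s := T m)).preimage_mem_nhdsWithin' h'
    have hAg : (fun y : X m => (WithLp.toLp 2 (Function.update x m y) : PiLp 2 X)) ⁻¹'
        {z : PiLp 2 X | ∀ m, z m ∈ A m} = A m := by
      ext y
      simp only [mem_preimage, mem_setOf_eq]
      constructor
      · intro hy
        have h2 := hy m
        rwa [Function.update_self] at h2
      · intro hy m'
        by_cases hm' : m' = m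
        · subst hm'
          show Function.update x m' y m' ∈ A m'
          rw [Function.update_self]; exact hy
        · show Function.update x m y m' ∈ A m'
          rw [Function.update_of_ne hm']; exact hxA m'
    rwa [hAg] at hpre
  · intro h
    have := fun m => mem_nhdsWithin.1 (h m)
    choose U hUo hxU hUT using this
    rw [mem_nhdsWithin]
    refine ⟨{z : PiLp 2 X | ∀ m, z m ∈ U m}, ?_, fun m => hxU m, ?_⟩
    · rw [piset_eq_pi]
      exact (isOpen_set_pi finite_univ (fun m _ => hUo m)).preimage (PiLp.continuous_ofLp 2 X)
    · rintro z ⟨hz1, hz2⟩ m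
      exact hUT m ⟨hz1 m, hz2 m⟩

lemma intrinsicInterior_pi (A : ∀ m, Set (X m)) :
    intrinsicInterior ℝ {z : PiLp 2 X | ∀ m, z m ∈ A m}
      = {z : PiLp 2 X | ∀ m, z m ∈ intrinsicInterior ℝ (A m)} := by
  by_cases hne : ∀ m, (A m).Nonempty
  · ext x
    rw [mem_intrinsicInterior_iff']
    simp only [mem_setOf_eq]
    have hspan := affineSpan_pi A hne
    constructor
    · rintro ⟨hxA, hnb⟩
      rw [hspan] at hnb
      have := (piset_nhdsWithin A (fun m => (affineSpan ℝ (A m) : Set (X m))) x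
        (fun m => subset_affineSpan ℝ (A m) (hxA m)) hxA).1 hnb
      intro m
      rw [mem_intrinsicInterior_iff']
      exact ⟨hxA m, this m⟩
    · intro h
      have h' := fun m => mem_intrinsicInterior_iff'.1 (h m)
      have hxA : ∀ m, x m ∈ A m := fun m => (h' m).1
      refine ⟨hxA, ?_⟩
      rw [hspan]
      exact (piset_nhdsWithin A (fun m => (affineSpan ℝ (A m) : Set (X m))) x
        (fun m => subset_affineSpan ℝ (A m) (hxA m)) hxA).2 (fun m => (h' m).2)
  · push_neg at hne
    obtain ⟨m0, hm0⟩ := hne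
    have h1 : {z : PiLp 2 X | ∀ m, z m ∈ A m} = ∅ := by
      ext z; simp only [mem_setOf_eq, mem_empty_iff_false, iff_false, not_forall]
      exact ⟨m0, by rw [hm0]; exact notMem_empty _⟩
    rw [h1, intrinsicInterior_empty]
    symm
    ext z; simp only [mem_setOf_eq, mem_empty_iff_false, iff_false, not_forall]
    refine ⟨m0, ?_⟩
    rw [hm0, intrinsicInterior_empty]
    exact notMem_empty _

lemma subdiff_pi (F : ∀ m, X m → EReal) (hF : ∀ m, ProperFn (F m)) (x u : PiLp 2 X) :
    u ∈ subdiff (fun z : PiLp 2 X => ∑ m, F m (z m)) x ↔ ∀ m, u m ∈ subdiff (F m) (x m) := by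
  constructor
  · intro h
    choose w hw using fun m => (hF m).2
    have hsw : (∑ m, F m (w m)) ≠ ⊤ := by
      have hb : ∀ m ∈ Finset.univ, F m (w m) = (((F m (w m)).toReal : ℝ) : EReal) :=
        fun m _ => (EReal.coe_toReal (hw m) ((hF m).1 _)).symm
      rw [Finset.sum_congr rfl hb, ereal_sum_coe]
      exact EReal.coe_ne_top _
    have hxt : ∀ m, F m (x m) ≠ ⊤ := by
      intro m htop
      apply hsw
      have hyw : (∑ m', F m' (x m')) + ((inner ℝ u ((WithLp.toLp 2 w : PiLp 2 X) - x) : ℝ) : EReal)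
          ≤ ∑ m', F m' (w m') := h (WithLp.toLp 2 w : PiLp 2 X)
      rw [ereal_sum_eq_top Finset.univ _ (fun i _ => (hF i).1 _) (Finset.mem_univ m) htop,
        EReal.top_add_coe] at hyw
      exact top_le_iff.1 hyw
    intro m ym'
    show F m (x m) + _ ≤ F m ym'
    set upd : PiLp 2 X := WithLp.toLp 2 (Function.update x m ym') with hupd
    have hy : (∑ m', F m' (x m')) + ((inner ℝ u (upd - x) : ℝ) : EReal) ≤ ∑ m', F m' (upd m') :=
      h upd
    set C : EReal := ∑ m' ∈ Finset.univ.erase m, F m' (x m') with hC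
    have hc : C = ((C.toReal : ℝ) : EReal) := by
      have hb : ∀ m' ∈ Finset.univ.erase m, F m' (x m') = (((F m' (x m')).toReal : ℝ) : EReal) :=
        fun m' _ => (EReal.coe_toReal (hxt m') ((hF m').1 _)).symm
      rw [hC, Finset.sum_congr rfl hb, ereal_sum_coe, EReal.toReal_coe]
    set c : ℝ := C.toReal with hcr
    have hsum_upd : (∑ m', F m' (upd m')) = F m ym' + C := by
      have heq : (fun m' => F m' (upd m')) =
          Function.update (fun m' => F m' (x m')) m (F m ym') := by
        funext m'
        by_cases hm' : m' = m
        · subst hm'; simp [hupd]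
        · simp [hupd, Function.update_of_ne hm']
      calc (∑ m', F m' (upd m'))
          = ∑ m', Function.update (fun m' => F m' (x m')) m (F m ym') m' := by rw [heq]
        _ = F m ym' + C := by
            rw [← Finset.add_sum_erase _ _ (Finset.mem_univ m), Function.update_self, hC]
            congr 1
            exact Finset.sum_congr rfl fun m' hm' =>
              Function.update_of_ne (Finset.ne_of_mem_erase hm') _ _
    have hsum_x : (∑ m', F m' (x m')) = F m (x m) + C := by
      rw [hC]
      exact (Finset.add_sum_erase _ _ (Finset.mem_univ m)).symm
    have hinner : (inner ℝ u (upd - x) : ℝ) = (inner ℝ (u m) (ym' - x m) : ℝ) := by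
      rw [PiLp.inner_apply, ← Finset.add_sum_erase _ _ (Finset.mem_univ m)]
      have h1 : (upd - x) m = ym' - x m := by simp [hupd, PiLp.sub_apply]
      have h2 : ∀ m' ∈ Finset.univ.erase m, (inner ℝ (u m') ((upd - x) m') : ℝ) = 0 := by
        intro m' hm'
        have hz : (upd - x) m' = 0 := by
          have := Function.update_of_ne (Finset.ne_of_mem_erase hm') ym' x
          simp [hupd, PiLp.sub_apply, this]
        rw [hz, inner_zero_right]
      rw [h1, Finset.sum_congr rfl h2, Finset.sum_const_zero, add_zero]
    rw [hsum_upd, hsum_x, hinner, hc] at hy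
    have hbm : F m (x m) = (((F m (x m)).toReal : ℝ) : EReal) :=
      (EReal.coe_toReal (hxt m) ((hF m).1 _)).symm
    set r : ℝ := (inner ℝ (u m) (ym' - x m) : ℝ) with hr
    have hre : F m (x m) + (c : EReal) + (r : EReal)
        = (F m (x m) + (r : EReal)) + (c : EReal) := by
      rw [hbm]; norm_cast; ring
    rw [hre] at hy
    exact (EReal.addLECancellable_coe c).add_le_add_iff_right.1 hy
  · intro h
    have hxt : ∀ m, F m (x m) ≠ ⊤ := by
      intro m htop
      obtain ⟨w, hw⟩ := (hF m).2
      have := h m w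
      rw [htop, EReal.top_add_coe] at this
      exact hw (top_le_iff.1 this)
    intro y
    show (∑ m', F m' (x m')) + _ ≤ ∑ m', F m' (y m')
    have key : ∀ m' ∈ Finset.univ,
        F m' (x m') + ((inner ℝ (u m') (y m' - x m') : ℝ) : EReal) ≤ F m' (y m') :=
      fun m' _ => h m' (y m')
    have hsum := Finset.sum_le_sum key
    refine le_trans (le_of_eq ?_) hsum
    have hb : ∀ m' ∈ Finset.univ,
        F m' (x m') + ((inner ℝ (u m') (y m' - x m') : ℝ) : EReal)
          = ((((F m' (x m')).toReal + (inner ℝ (u m') (y m' - x m') : ℝ)) : ℝ) : EReal) := by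
      intro m' _
      rw [EReal.coe_add]
      congr 1
      exact (EReal.coe_toReal (hxt m') ((hF m').1 _)).symm
    rw [Finset.sum_congr rfl hb, ereal_sum_coe]
    have hbx : ∀ m' ∈ Finset.univ, F m' (x m') = (((F m' (x m')).toReal : ℝ) : EReal) :=
      fun m' _ => (EReal.coe_toReal (hxt m') ((hF m').1 _)).symm
    rw [Finset.sum_congr rfl hbx, ereal_sum_coe, PiLp.inner_apply]
    norm_cast
    rw [← Finset.sum_add_distrib]
    congr 1

lemma fenchel_pi (F : ∀ m, X m → EReal) (hbot : ∀ m x, F m x ≠ ⊥) (u : PiLp 2 X) :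
    fenchel (fun z : PiLp 2 X => ∑ m, F m (z m)) u = ∑ m, fenchel (F m) (u m) := by
  have h1 : ∀ x : PiLp 2 X,
      ((inner ℝ u x : ℝ) : EReal) - (∑ m, F m (x m)) =
        ∑ m, (((inner ℝ (u m) (x m) : ℝ) : EReal) - F m (x m)) := by
    intro x
    rw [PiLp.inner_apply]
    exact ereal_coe_sub_sum Finset.univ _ (fun m _ => hbot m _) _
  have h2 : fenchel (fun z : PiLp 2 X => ∑ m, F m (z m)) u
      = ⨆ x : ∀ m, X m, ∑ m, (((inner ℝ (u m) (x m) : ℝ) : EReal) - F m (x m)) := by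
    rw [fenchel]
    exact (iSup_congr h1).trans ((WithLp.equiv 2 (∀ m, X m)).iSup_comp
      (g := fun x : ∀ m, X m => ∑ m, (((inner ℝ (u m) (x m) : ℝ) : EReal) - F m (x m))))
  rw [h2, ereal_iSup_sum (fun m y => ((inner ℝ (u m) y : ℝ) : EReal) - F m y) Finset.univ]
  rfl

lemma domSubdiff_pi (F : ∀ m, X m → EReal) (hF : ∀ m, ProperFn (F m)) :
    domSubdiff (fun z : PiLp 2 X => ∑ m, F m (z m))
      = {x : PiLp 2 X | ∀ m, x m ∈ domSubdiff (F m)} := by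
  ext x
  constructor
  · rintro ⟨u, hu⟩ m
    exact ⟨u m, (subdiff_pi F hF x u).1 hu m⟩
  · intro h
    choose u hu using h
    exact ⟨(WithLp.toLp 2 u : PiLp 2 X), (subdiff_pi F hF x (WithLp.toLp 2 u)).2 hu⟩

lemma corrOp_pi (F : ∀ m, X m → EReal) (hF : ∀ m, ProperFn (F m)) (Ms : ∀ m, Set (X m)) :
    corrOp (fun z : PiLp 2 X => ∑ m, F m (z m)) {z : PiLp 2 X | ∀ m, z m ∈ Ms m}
      = {u : PiLp 2 X | ∀ m, u m ∈ corrOp (F m) (Ms m)} := by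
  have hsub : ∀ x : PiLp 2 X,
      intrinsicInterior ℝ (subdiff (fun z : PiLp 2 X => ∑ m, F m (z m)) x)
        = {v : PiLp 2 X | ∀ m, v m ∈ intrinsicInterior ℝ (subdiff (F m) (x m))} := by
    intro x
    have : subdiff (fun z : PiLp 2 X => ∑ m, F m (z m)) x
        = {v : PiLp 2 X | ∀ m, v m ∈ subdiff (F m) (x m)} :=
      Set.ext fun v => subdiff_pi F hF x v
    rw [this, intrinsicInterior_pi]
  ext u
  constructor
  · intro hu
    obtain ⟨x, hx, hu2⟩ := mem_iUnion₂.1 hu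
    rw [hsub x] at hu2
    intro m
    exact mem_iUnion₂.2 ⟨x m, hx m, hu2 m⟩
  · intro h
    have := fun m => mem_iUnion₂.1 (h m)
    choose x hx hu using this
    refine mem_iUnion₂.2 ⟨(WithLp.toLp 2 x : PiLp 2 X), hx, ?_⟩
    rw [hsub]
    exact hu

lemma isStratification_pi (D : ∀ m, Set (X m)) (SS : ∀ m, Set (Set (X m)))
    (h : ∀ m, IsStratification (D m) (SS m)) :
    IsStratification {z : PiLp 2 X | ∀ m, z m ∈ D m}
      {M : Set (PiLp 2 X) | ∃ Ms : ∀ m, Set (X m),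
        (∀ m, Ms m ∈ SS m) ∧ M = {z | ∀ m, z m ∈ Ms m}} := by
  constructor
  · have h1 : {M : Set (PiLp 2 X) | ∃ Ms : ∀ m, Set (X m),
        (∀ m, Ms m ∈ SS m) ∧ M = {z | ∀ m, z m ∈ Ms m}} =
        (fun Ms : ∀ m, Set (X m) => {z : PiLp 2 X | ∀ m, z m ∈ Ms m}) '' (Set.pi univ SS) := by
      ext M
      constructor
      · rintro ⟨Ms, h1, rfl⟩; exact ⟨Ms, fun m _ => h1 m, rfl⟩
      · rintro ⟨Ms, h1, rfl⟩; exact ⟨Ms, fun m => h1 m (mem_univ m), rfl⟩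
    rw [h1]
    exact (Set.Finite.pi fun m => (h m).finite).image _
  · rintro M ⟨Ms, hMs, rfl⟩
    exact piset_nonempty fun m => (h m).nonempty _ (hMs m)
  · apply Subset.antisymm
    · rintro x ⟨M, ⟨Ms, hMs, rfl⟩, hx⟩ m
      rw [← (h m).cover]
      exact ⟨Ms m, hMs m, hx m⟩
    · intro x hx
      have : ∀ m, ∃ Mm ∈ SS m, x m ∈ Mm := by
        intro m
        have := hx m
        rw [← (h m).cover] at this
        exact this
      choose Ms hMs hxMs using this
      exact ⟨{z | ∀ m, z m ∈ Ms m}, ⟨Ms, hMs, rfl⟩, hxMs⟩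
  · rintro M ⟨Ms, hMs, rfl⟩ M' ⟨Ms', hMs', rfl⟩ hne
    have : ∃ m, Ms m ≠ Ms' m := by
      by_contra hc
      push_neg at hc
      exact hne (by rw [funext hc])
    obtain ⟨m0, hm0⟩ := this
    rw [Set.disjoint_left]
    intro z hz hz'
    exact Set.disjoint_left.1
      ((h m0).pairwiseDisjoint _ (hMs m0) _ (hMs' m0) hm0) (hz m0) (hz' m0)
  · rintro M ⟨Ms, hMs, rfl⟩ M' ⟨Ms', hMs', rfl⟩ ⟨x, hx1, hx2⟩
    rw [closure_piset] at hx2 ⊢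
    intro z hz m
    exact (h m).frontier_cond _ (hMs m) _ (hMs' m) ⟨x m, hx1 m, hx2 m⟩ (hz m)

end PiLemmas

/-- Product stratification: strata are products `M₁ × ⋯ × M_L` of strata of the factors. -/
def prodStrat {L : ℕ} {Nd : Fin L → ℕ}
    (S : ∀ m, Set (Set (EuclideanSpace ℝ (Fin (Nd m))))) :
    Set (Set (PiLp 2 fun m => EuclideanSpace ℝ (Fin (Nd m)))) :=
  {M | ∃ Ms : ∀ m, Set (EuclideanSpace ℝ (Fin (Nd m))),
    (∀ m, Ms m ∈ S m) ∧ M = {x | ∀ m, x m ∈ Ms m}}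

/-- Remark 2.5, separability: if each `R_m` is proper lsc convex and
mirror-stratifiable w.r.t. `(S_m, Sd_m)`, then the separable sum
`R(x) = Σ_m R_m(x_m)` is mirror-stratifiable w.r.t. the product stratifications. -/
theorem separable_sum_mirror_stratifiable
    {L : ℕ} {Nd : Fin L → ℕ}
    (R : ∀ m, EuclideanSpace ℝ (Fin (Nd m)) → EReal)
    (hR : ∀ m, ProperConvexLsc (R m))
    (S Sd : ∀ m, Set (Set (EuclideanSpace ℝ (Fin (Nd m)))))
    (hms : ∀ m, IsMirrorStratifiable (R m) (S m) (Sd m)) :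
    IsMirrorStratifiable
      (fun x : PiLp 2 fun m => EuclideanSpace ℝ (Fin (Nd m)) => ∑ m, R m (x m))
      (prodStrat S) (prodStrat Sd) := by
  classical
  have hprop : ∀ m, ProperFn (R m) := fun m => (hR m).1
  have hfprop : ∀ m, ProperFn (fenchel (R m)) := fun m => fenchel_proper (hprop m) (hms m)
  have hfen : fenchel (fun x : PiLp 2 fun m => EuclideanSpace ℝ (Fin (Nd m)) => ∑ m, R m (x m))
      = fun u : PiLp 2 fun m => EuclideanSpace ℝ (Fin (Nd m)) => ∑ m, fenchel (R m) (u m) :=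
    funext fun u => fenchel_pi R (fun m x => (hprop m).1 x) u
  refine ⟨?_, ?_, ?_, ?_, ?_, ?_⟩
  · -- primal stratification
    have key := isStratification_pi (fun m => domSubdiff (R m)) S (fun m => (hms m).primal)
    have hdom := domSubdiff_pi R hprop
    rw [← hdom] at key
    exact key
  · -- dual stratification
    have key := isStratification_pi (fun m => domSubdiff (fenchel (R m))) Sd
      (fun m => (hms m).dual)
    have hdom := domSubdiff_pi (fun m => fenchel (R m)) hfprop
    rw [← hdom] at key
    rw [hfen]
    exact key
  · -- maps_primal
    rintro M ⟨Ms, hMs, rfl⟩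
    rw [corrOp_pi R hprop Ms]
    exact ⟨fun m => corrOp (R m) (Ms m), fun m => (hms m).maps_primal _ (hMs m), rfl⟩
  · -- maps_dual
    rintro Md ⟨Msd, hMsd, rfl⟩
    rw [hfen, corrOp_pi (fun m => fenchel (R m)) hfprop Msd]
    exact ⟨fun m => corrOp (fenchel (R m)) (Msd m), fun m => (hms m).maps_dual _ (hMsd m), rfl⟩
  · -- pairing
    rintro M ⟨Ms, hMs, rfl⟩ Md ⟨Msd, hMsd, rfl⟩
    have hcn : ∀ m, (corrOp (R m) (Ms m)).Nonempty :=
      fun m => (hms m).dual.nonempty _ ((hms m).maps_primal _ (hMs m))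
    have hdn : ∀ m, (corrOp (fenchel (R m)) (Msd m)).Nonempty :=
      fun m => (hms m).primal.nonempty _ ((hms m).maps_dual _ (hMsd m))
    rw [hfen, corrOp_pi R hprop Ms, corrOp_pi (fun m => fenchel (R m)) hfprop Msd,
      piset_eq_iff hcn, piset_eq_iff hdn]
    constructor
    · intro h m; exact ((hms m).pairing _ (hMs m) _ (hMsd m)).1 (h m)
    · intro h m; exact ((hms m).pairing _ (hMs m) _ (hMsd m)).2 (h m)
  · -- decreasing
    rintro M ⟨Ms, hMs, rfl⟩ M' ⟨Ms', hMs', rfl⟩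
    have hMne : ∀ m, (Ms m).Nonempty := fun m => (hms m).primal.nonempty _ (hMs m)
    have hcn' : ∀ m, (corrOp (R m) (Ms' m)).Nonempty :=
      fun m => (hms m).dual.nonempty _ ((hms m).maps_primal _ (hMs' m))
    simp only [stratLE]
    rw [corrOp_pi R hprop Ms, corrOp_pi R hprop Ms', closure_piset, closure_piset,
      piset_subset_iff hMne, piset_subset_iff hcn']
    constructor
    · intro h m; exact ((hms m).decreasing _ (hMs m) _ (hMs' m)).1 (h m)
    · intro h m; exact ((hms m).decreasing _ (hMs m) _ (hMs' m)).2 (h m)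


end
end

section
/- Let ℬ be a non-overlapping partition of {1, …, N} into K blocks, and let the ℓ_{1,2} norm be ‖x‖_ℬ = Σ_{B∈ℬ} ‖x^B‖₂, where x^B is the restriction of x ∈ ℝ^N to the entries indexed by B. Then ‖·‖_ℬ is mirror-stratifiable with respect to the product stratification whose strata are products over blocks B ∈ ℬ of the sets {0} ⊆ ℝ^{|B|} or ℝ^{|B|} ∖ {0}, and the product stratification whose strata are products over blocks B ∈ ℬ of the unit Euclidean sphere S^{|B|−1} or the open unit Euclidean ball of ℝ^{|B|}. -/
open Filter Topology Set Pointwise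

noncomputable section

variable {E : Type*} [NormedAddCommGroup E] [InnerProductSpace ℝ E]

/-- The Euclidean norm of the restriction of `x` to the block `b` of the partition
encoded by `Bl : Fin N → Fin K`. -/
def blockNorm {N K : ℕ} (Bl : Fin N → Fin K) (x : EuclideanSpace ℝ (Fin N)) (b : Fin K) : ℝ :=
  Real.sqrt (∑ i ∈ Finset.univ.filter (fun i => Bl i = b), (x i) ^ 2)

/-- The `ℓ_{1,2}` (group Lasso) norm associated with the partition `Bl`. -/
def l12Norm {N K : ℕ} (Bl : Fin N → Fin K) (x : EuclideanSpace ℝ (Fin N)) : ℝ :=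
  ∑ b, blockNorm Bl x b

/-- Primal strata: products over blocks of `{0}` or `ℝ^{|B|} ∖ {0}`. -/
def l12PrimalStrat {N K : ℕ} (Bl : Fin N → Fin K) : Set (Set (EuclideanSpace ℝ (Fin N))) :=
  {M | ∃ s : Fin K → Bool,
    M = {x | ∀ b, if s b then (∃ i, Bl i = b ∧ x i ≠ 0) else (∀ i, Bl i = b → x i = 0)}}

/-- Dual strata: products over blocks of the unit sphere or the open unit ball. -/
def l12DualStrat {N K : ℕ} (Bl : Fin N → Fin K) : Set (Set (EuclideanSpace ℝ (Fin N))) :=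
  {M | ∃ s : Fin K → Bool,
    M = {u | ∀ b, if s b then blockNorm Bl u b = 1 else blockNorm Bl u b < 1}}

/-! ### Auxiliary machinery for the `ℓ_{1,2}` norm -/

section Aux

open scoped Classical

variable {N K : ℕ} (Bl : Fin N → Fin K)

/-- Projection onto the coordinates of block `b`. -/
def Pb (b : Fin K) (x : EuclideanSpace ℝ (Fin N)) : EuclideanSpace ℝ (Fin N) :=
  WithLp.toLp 2 (fun i => if Bl i = b then x i else 0)

lemma Pb_apply (b) (x : EuclideanSpace ℝ (Fin N)) (i) :
    Pb Bl b x i = if Bl i = b then x i else 0 := rfl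

lemma Pb_add (b) (x y : EuclideanSpace ℝ (Fin N)) : Pb Bl b (x + y) = Pb Bl b x + Pb Bl b y := by
  ext i; simp only [Pb, PiLp.add_apply]; split <;> simp

lemma Pb_smul (b) (c : ℝ) (x : EuclideanSpace ℝ (Fin N)) : Pb Bl b (c • x) = c • Pb Bl b x := by
  ext i; simp only [Pb, PiLp.smul_apply, smul_eq_mul]; split <;> simp

/-- `Pb` as a linear map. -/
def PbLin (b : Fin K) : EuclideanSpace ℝ (Fin N) →ₗ[ℝ] EuclideanSpace ℝ (Fin N) where
  toFun := Pb Bl b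
  map_add' := Pb_add Bl b
  map_smul' := Pb_smul Bl b

lemma Pb_zero (b) : Pb Bl b (0 : EuclideanSpace ℝ (Fin N)) = 0 := map_zero (PbLin Bl b)

lemma Pb_sub (b) (x y : EuclideanSpace ℝ (Fin N)) :
    Pb Bl b (x - y) = Pb Bl b x - Pb Bl b y := map_sub (PbLin Bl b) x y

lemma Pb_sumF (b) {α : Type*} (A : Finset α) (f : α → EuclideanSpace ℝ (Fin N)) :
    Pb Bl b (∑ j ∈ A, f j) = ∑ j ∈ A, Pb Bl b (f j) := map_sum (PbLin Bl b) f A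

lemma continuous_Pb (b) : Continuous (Pb Bl b) :=
  (PbLin Bl b).continuous_of_finiteDimensional

lemma Pb_sum (x : EuclideanSpace ℝ (Fin N)) : ∑ b, Pb Bl b x = x := by
  ext i
  have h1 : (∑ b, Pb Bl b x) i = ∑ b, (if Bl i = b then x i else 0) := by
    rw [WithLp.ofLp_sum, Finset.sum_apply]; rfl
  rw [h1, Finset.sum_ite_eq (Finset.univ) (Bl i) (fun _ => x i)]
  simp

lemma blockNorm_eq (x : EuclideanSpace ℝ (Fin N)) (b : Fin K) :
    blockNorm Bl x b = ‖Pb Bl b x‖ := by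
  rw [EuclideanSpace.norm_eq, blockNorm]
  congr 1
  rw [← Finset.sum_filter_add_sum_filter_not Finset.univ (fun i => Bl i = b)
    (fun i => ‖Pb Bl b x i‖ ^ 2)]
  have h1 : ∀ i ∈ Finset.univ.filter (fun i => Bl i = b), ‖Pb Bl b x i‖ ^ 2 = x i ^ 2 := by
    intro i hi; simp only [Finset.mem_filter] at hi
    rw [Pb_apply, if_pos hi.2, Real.norm_eq_abs, sq_abs]
  have h2 : ∀ i ∈ Finset.univ.filter (fun i => ¬ Bl i = b), ‖Pb Bl b x i‖ ^ 2 = 0 := by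
    intro i hi; simp only [Finset.mem_filter] at hi
    rw [Pb_apply, if_neg hi.2]; simp
  rw [Finset.sum_congr rfl h1, Finset.sum_congr rfl h2]
  simp

lemma inner_Pb_left (b) (x y : EuclideanSpace ℝ (Fin N)) :
    (inner ℝ (Pb Bl b x) y : ℝ) = ∑ i ∈ Finset.univ.filter (fun i => Bl i = b), x i * y i := by
  rw [PiLp.inner_apply]
  rw [← Finset.sum_filter_add_sum_filter_not Finset.univ (fun i => Bl i = b)]
  have h2 : ∀ i ∈ Finset.univ.filter (fun i => ¬ Bl i = b),
      (inner ℝ (Pb Bl b x i) (y i) : ℝ) = 0 := by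
    intro i hi; simp only [Finset.mem_filter] at hi
    rw [Pb_apply, if_neg hi.2]; simp
  rw [Finset.sum_congr rfl h2]
  simp only [Finset.sum_const_zero, add_zero]
  refine Finset.sum_congr rfl fun i hi => ?_
  simp only [Finset.mem_filter] at hi
  rw [Pb_apply, if_pos hi.2, RCLike.inner_apply, starRingEnd_apply, star_trivial, mul_comm]

lemma Pb_Pb (b b' : Fin K) (x : EuclideanSpace ℝ (Fin N)) :
    Pb Bl b (Pb Bl b' x) = if b = b' then Pb Bl b x else 0 := by
  split
  · subst ‹b = b'›; ext i; simp only [Pb]; split <;> simp_all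
  · ext i; simp only [Pb]
    split
    · rw [if_neg]; · rfl
      · intro h; exact ‹¬ b = b'› (by rw [← ‹Bl i = b›, h])
    · rfl

lemma inner_Pb_Pb (b) (x y : EuclideanSpace ℝ (Fin N)) :
    (inner ℝ (Pb Bl b x) (Pb Bl b y) : ℝ) = inner ℝ (Pb Bl b x) y := by
  rw [inner_Pb_left, inner_Pb_left]
  refine Finset.sum_congr rfl fun i hi => ?_
  simp only [Finset.mem_filter] at hi
  rw [Pb_apply, if_pos hi.2]

lemma inner_Pb_right (b) (x y : EuclideanSpace ℝ (Fin N)) :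
    (inner ℝ x (Pb Bl b y) : ℝ) = inner ℝ (Pb Bl b x) (Pb Bl b y) := by
  rw [real_inner_comm, inner_Pb_left, inner_Pb_Pb, inner_Pb_left]
  exact Finset.sum_congr rfl fun i _ => mul_comm _ _

lemma inner_blocks (u x : EuclideanSpace ℝ (Fin N)) :
    (inner ℝ u x : ℝ) = ∑ b, (inner ℝ (Pb Bl b u) (Pb Bl b x) : ℝ) := by
  have h : ∀ b, (inner ℝ (Pb Bl b u) (Pb Bl b x) : ℝ)
      = ∑ i ∈ Finset.univ.filter (fun i => Bl i = b), u i * x i := by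
    intro b; rw [inner_Pb_Pb, inner_Pb_left]
  rw [Finset.sum_congr rfl (fun b _ => h b),
    Finset.sum_fiberwise_of_maps_to (fun i _ => Finset.mem_univ (Bl i))]
  rw [PiLp.inner_apply]
  refine Finset.sum_congr rfl fun i _ => ?_
  rw [RCLike.inner_apply, starRingEnd_apply, star_trivial, mul_comm]

lemma l12_eq (x : EuclideanSpace ℝ (Fin N)) : l12Norm Bl x = ∑ b, ‖Pb Bl b x‖ :=
  Finset.sum_congr rfl fun b _ => blockNorm_eq Bl x b

lemma inner_le_l12 (u y : EuclideanSpace ℝ (Fin N)) (h : ∀ b, ‖Pb Bl b u‖ ≤ 1) :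
    (inner ℝ u y : ℝ) ≤ l12Norm Bl y := by
  rw [inner_blocks, l12_eq]
  refine Finset.sum_le_sum fun b _ => ?_
  calc (inner ℝ (Pb Bl b u) (Pb Bl b y) : ℝ) ≤ ‖Pb Bl b u‖ * ‖Pb Bl b y‖ := real_inner_le_norm _ _
    _ ≤ 1 * ‖Pb Bl b y‖ := mul_le_mul_of_nonneg_right (h b) (norm_nonneg _)
    _ = ‖Pb Bl b y‖ := one_mul _

lemma l12_Pb (b) (u : EuclideanSpace ℝ (Fin N)) : l12Norm Bl (Pb Bl b u) = ‖Pb Bl b u‖ := by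
  rw [l12_eq]
  rw [Finset.sum_eq_single b]
  · rw [Pb_Pb, if_pos rfl]
  · intro b' _ hb'; rw [Pb_Pb, if_neg (by exact hb'), norm_zero]
  · intro h; exact absurd (Finset.mem_univ b) h

lemma l12_smul (c : ℝ) (hc : 0 ≤ c) (x : EuclideanSpace ℝ (Fin N)) :
    l12Norm Bl (c • x) = c * l12Norm Bl x := by
  rw [l12_eq, l12_eq, Finset.mul_sum]
  refine Finset.sum_congr rfl fun b _ => ?_
  rw [Pb_smul, norm_smul, Real.norm_eq_abs, abs_of_nonneg hc]

lemma l12_zero : l12Norm Bl (0 : EuclideanSpace ℝ (Fin N)) = 0 := by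
  rw [l12_eq]
  refine Finset.sum_eq_zero fun b _ => ?_
  rw [Pb_zero, norm_zero]

/-- Glue blockwise data into one vector. -/
def glue (v : Fin K → EuclideanSpace ℝ (Fin N)) : EuclideanSpace ℝ (Fin N) :=
  ∑ b, Pb Bl b (v b)

lemma Pb_glue (b : Fin K) (v : Fin K → EuclideanSpace ℝ (Fin N)) :
    Pb Bl b (glue Bl v) = Pb Bl b (v b) := by
  rw [glue, Pb_sumF]
  rw [Finset.sum_congr rfl (fun b' (_ : b' ∈ Finset.univ) => Pb_Pb Bl b b' (v b'))]
  rw [Finset.sum_ite_eq Finset.univ b (fun b' => Pb Bl b (v b'))]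
  simp

/-- A unit vector supported in block `b`. -/
def eVec (hBl : Function.Surjective Bl) (b : Fin K) : EuclideanSpace ℝ (Fin N) :=
  EuclideanSpace.single (hBl b).choose (1:ℝ)

lemma Pb_eVec (hBl : Function.Surjective Bl) (b b' : Fin K) :
    Pb Bl b' (eVec Bl hBl b) = if b' = b then eVec Bl hBl b else 0 := by
  have hidx : Bl (hBl b).choose = b := (hBl b).choose_spec
  ext i
  rw [Pb_apply]
  by_cases hib : i = (hBl b).choose
  · subst hib
    rw [hidx]
    by_cases hbb : b' = b <;> simp [hbb]
    exact fun h => absurd h.symm hbb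
  · have h0 : eVec Bl hBl b i = 0 := by
      rw [eVec, EuclideanSpace.single_apply, if_neg hib]
    by_cases hbb : b' = b <;> simp [hbb, h0]

lemma norm_eVec (hBl : Function.Surjective Bl) (b : Fin K) : ‖eVec Bl hBl b‖ = 1 := by
  rw [eVec, EuclideanSpace.norm_single, norm_one]

lemma eVec_ne_zero (hBl : Function.Surjective Bl) (b : Fin K) : eVec Bl hBl b ≠ 0 := by
  intro h
  have := norm_eVec Bl hBl b
  rw [h, norm_zero] at this
  norm_num at this

lemma Pb_eq_zero_iff (b) (x : EuclideanSpace ℝ (Fin N)) :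
    Pb Bl b x = 0 ↔ ∀ i, Bl i = b → x i = 0 := by
  constructor
  · intro h i hi
    have := congrArg (fun v => v i) h
    rwa [Pb_apply, if_pos hi] at this
  · intro h
    ext i
    rw [Pb_apply]
    split
    · exact h i ‹_›
    · rfl

/-- Primal stratum with pattern `s`, in terms of block projections. -/
def StratP (s : Fin K → Bool) : Set (EuclideanSpace ℝ (Fin N)) :=
  {x | ∀ b, (s b = true → Pb Bl b x ≠ 0) ∧ (s b = false → Pb Bl b x = 0)}

/-- Dual stratum with pattern `s`, in terms of block projections. -/
def StratD (s : Fin K → Bool) : Set (EuclideanSpace ℝ (Fin N)) :=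
  {u | ∀ b, (s b = true → ‖Pb Bl b u‖ = 1) ∧ (s b = false → ‖Pb Bl b u‖ < 1)}

lemma primal_stratum_eq (s : Fin K → Bool) :
    {x : EuclideanSpace ℝ (Fin N) | ∀ b,
        if s b then (∃ i, Bl i = b ∧ x i ≠ 0) else (∀ i, Bl i = b → x i = 0)}
      = StratP Bl s := by
  ext x
  simp only [mem_setOf_eq, StratP]
  refine forall_congr' fun b => ?_
  cases hs : s b
  · simp [hs, Pb_eq_zero_iff]
  · simp only [hs, if_true, reduceIte]
    constructor
    · rintro ⟨i, hi, hxi⟩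
      exact ⟨fun _ => fun h0 => hxi ((Pb_eq_zero_iff Bl b x).mp h0 i hi), fun h' => by simp at h'⟩
    · intro h
      by_contra hc
      push_neg at hc
      exact h.1 trivial ((Pb_eq_zero_iff Bl b x).mpr fun i hi => hc i hi)

lemma dual_stratum_eq (s : Fin K → Bool) :
    {u : EuclideanSpace ℝ (Fin N) | ∀ b,
        if s b then blockNorm Bl u b = 1 else blockNorm Bl u b < 1}
      = StratD Bl s := by
  ext u
  simp only [mem_setOf_eq, StratD]
  refine forall_congr' fun b => ?_
  rw [blockNorm_eq]
  cases hs : s b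
  · simp [hs]
  · simp [hs]

lemma l12PrimalStrat_eq : l12PrimalStrat Bl = Set.range (StratP Bl) := by
  ext M
  simp only [l12PrimalStrat, mem_setOf_eq, Set.mem_range]
  constructor
  · rintro ⟨s, rfl⟩; exact ⟨s, (primal_stratum_eq Bl s).symm⟩
  · rintro ⟨s, rfl⟩; exact ⟨s, (primal_stratum_eq Bl s).symm⟩

lemma l12DualStrat_eq : l12DualStrat Bl = Set.range (StratD Bl) := by
  ext M
  simp only [l12DualStrat, mem_setOf_eq, Set.mem_range]
  constructor
  · rintro ⟨s, rfl⟩; exact ⟨s, (dual_stratum_eq Bl s).symm⟩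
  · rintro ⟨s, rfl⟩; exact ⟨s, (dual_stratum_eq Bl s).symm⟩

/-! #### Relative interior computation tool -/

lemma ri_eq' {E : Type*} [NormedAddCommGroup E] [InnerProductSpace ℝ E] {s t : Set E}
    (U : Set E) (hU : IsOpen U) (hts : t ⊆ s) (htU : t ⊆ U)
    (hUA : ∀ x ∈ U, x ∈ affineSpan ℝ s → x ∈ t)
    (hesc : ∀ x ∈ s, x ∉ t → ∀ ε > 0, ∃ z, z ∈ affineSpan ℝ s ∧ z ∉ s ∧ dist z x < ε) :
    intrinsicInterior ℝ s = t := by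
  apply subset_antisymm
  · rintro x ⟨y, hy, rfl⟩
    have hxs : (y : E) ∈ s := interior_subset (s := (Subtype.val ⁻¹' s)) hy
    by_contra hxt
    rw [mem_interior_iff_mem_nhds, Metric.mem_nhds_iff] at hy
    obtain ⟨ε, εpos, hball⟩ := hy
    obtain ⟨z, hzA, hzs, hzd⟩ := hesc y hxs hxt ε εpos
    have hmem : (⟨z, hzA⟩ : affineSpan ℝ s) ∈ Metric.ball y ε := by
      rw [Metric.mem_ball, Subtype.dist_eq]
      exact hzd
    exact hzs (hball hmem)
  · intro x hxt
    have hxA : x ∈ affineSpan ℝ s := subset_affineSpan ℝ s (hts hxt)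
    refine ⟨⟨x, hxA⟩, ?_, rfl⟩
    have hopen : IsOpen ((↑) ⁻¹' U : Set (affineSpan ℝ s)) :=
      hU.preimage continuous_subtype_val
    have hsub : ((↑) ⁻¹' U : Set (affineSpan ℝ s)) ⊆ (↑) ⁻¹' s := fun a ha =>
      hts (hUA _ ha a.2)
    exact interior_maximal hsub hopen (htU hxt)

/-! #### Closure of the strata -/

lemma closure_StratP (hBl : Function.Surjective Bl) (s : Fin K → Bool) :
    closure (StratP Bl s) = {x | ∀ b, s b = false → Pb Bl b x = 0} := by
  apply subset_antisymm
  · refine closure_minimal (fun x hx b hb => (hx b).2 hb) ?_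
    have hrw : {x : EuclideanSpace ℝ (Fin N) | ∀ b, s b = false → Pb Bl b x = 0}
        = ⋂ b, {x | s b = false → Pb Bl b x = 0} := by
      ext x; simp
    rw [hrw]
    refine isClosed_iInter fun b => ?_
    by_cases hs : s b = false
    · have : {x : EuclideanSpace ℝ (Fin N) | s b = false → Pb Bl b x = 0}
          = (Pb Bl b) ⁻¹' {0} := by
        ext x; simp [hs]
      rw [this]
      exact IsClosed.preimage (continuous_Pb Bl b) isClosed_singleton
    · have : {x : EuclideanSpace ℝ (Fin N) | s b = false → Pb Bl b x = 0} = univ := by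
        ext x; simp [hs]
      rw [this]; exact isClosed_univ
  · intro x hx
    rw [Metric.mem_closure_iff]
    intro ε hε
    set w : EuclideanSpace ℝ (Fin N) :=
      glue Bl (fun b => if s b = true ∧ Pb Bl b x = 0 then eVec Bl hBl b else 0) with hw
    set δ : ℝ := ε / (‖w‖ + 1) with hδ
    have hδpos : 0 < δ := div_pos hε (by positivity)
    have hPbw : ∀ b, Pb Bl b w =
        if s b = true ∧ Pb Bl b x = 0 then eVec Bl hBl b else 0 := by
      intro b
      rw [hw, Pb_glue]
      split
      · rename_i hc
        rw [Pb_eVec Bl hBl, if_pos rfl]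
      · rw [Pb_zero]
    refine ⟨x + δ • w, ?_, ?_⟩
    · intro b
      constructor
      · intro hb
        rw [Pb_add, Pb_smul, hPbw]
        by_cases hx0 : Pb Bl b x = 0
        · rw [if_pos ⟨hb, hx0⟩, hx0, zero_add]
          exact smul_ne_zero (ne_of_gt hδpos) (eVec_ne_zero Bl hBl b)
        · rw [if_neg (fun hc => hx0 hc.2), smul_zero, add_zero]
          exact hx0
      · intro hb
        rw [Pb_add, Pb_smul, hPbw, if_neg (fun hc => by rw [hb] at hc; exact absurd hc.1 (by simp)),
          smul_zero, add_zero]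
        exact hx b hb
    · rw [dist_comm, dist_eq_norm, add_sub_cancel_left, norm_smul, Real.norm_eq_abs,
        abs_of_pos hδpos, hδ]
      calc ε / (‖w‖ + 1) * ‖w‖ < ε / (‖w‖ + 1) * (‖w‖ + 1) := by
            apply mul_lt_mul_of_pos_left (by linarith) (div_pos hε (by positivity))
        _ = ε := div_mul_cancel₀ _ (by positivity)

lemma closure_StratD (s : Fin K → Bool) :
    closure (StratD Bl s) =
      {u | ∀ b, (s b = true → ‖Pb Bl b u‖ = 1) ∧ (s b = false → ‖Pb Bl b u‖ ≤ 1)} := by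
  apply subset_antisymm
  · refine closure_minimal (fun u hu b => ⟨(hu b).1, fun hb => le_of_lt ((hu b).2 hb)⟩) ?_
    have hrw : {u : EuclideanSpace ℝ (Fin N) | ∀ b,
        (s b = true → ‖Pb Bl b u‖ = 1) ∧ (s b = false → ‖Pb Bl b u‖ ≤ 1)}
        = ⋂ b, {u | (s b = true → ‖Pb Bl b u‖ = 1) ∧ (s b = false → ‖Pb Bl b u‖ ≤ 1)} := by
      ext u; simp
    rw [hrw]
    refine isClosed_iInter fun b => ?_
    by_cases hs : s b = true
    · have : {u : EuclideanSpace ℝ (Fin N) |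
          (s b = true → ‖Pb Bl b u‖ = 1) ∧ (s b = false → ‖Pb Bl b u‖ ≤ 1)}
          = (fun u => ‖Pb Bl b u‖) ⁻¹' {1} := by
        ext u; simp [hs]
      rw [this]
      exact IsClosed.preimage ((continuous_Pb Bl b).norm) isClosed_singleton
    · have : {u : EuclideanSpace ℝ (Fin N) |
          (s b = true → ‖Pb Bl b u‖ = 1) ∧ (s b = false → ‖Pb Bl b u‖ ≤ 1)}
          = (fun u => ‖Pb Bl b u‖) ⁻¹' (Iic 1) := by
        ext u; simp [hs, Bool.not_eq_true _ ▸ hs]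
      rw [this]
      exact IsClosed.preimage ((continuous_Pb Bl b).norm) isClosed_Iic
  · intro u hu
    rw [Metric.mem_closure_iff]
    intro ε hε
    set S : ℝ := ∑ b, ‖Pb Bl b u‖ with hS
    have hS0 : 0 ≤ S := Finset.sum_nonneg fun b _ => norm_nonneg _
    set δ : ℝ := min (1/2) (ε / (S + 1)) with hδ
    have hδpos : 0 < δ := lt_min (by norm_num) (div_pos hε (by positivity))
    have hδle : δ ≤ 1/2 := min_le_left _ _
    set y : EuclideanSpace ℝ (Fin N) :=
      glue Bl (fun b => if s b = true then Pb Bl b u else (1 - δ) • Pb Bl b u) with hy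
    have hPby : ∀ b, Pb Bl b y =
        if s b = true then Pb Bl b u else (1 - δ) • Pb Bl b u := by
      intro b
      rw [hy, Pb_glue]
      split
      · rw [Pb_Pb, if_pos rfl]
      · rw [Pb_smul, Pb_Pb, if_pos rfl]
    refine ⟨y, ?_, ?_⟩
    · intro b
      constructor
      · intro hb
        rw [hPby, if_pos hb]
        exact (hu b).1 hb
      · intro hb
        rw [hPby, if_neg (by rw [hb]; simp), norm_smul, Real.norm_eq_abs,
          abs_of_pos (by linarith : (0:ℝ) < 1 - δ)]
        have h1 : ‖Pb Bl b u‖ ≤ 1 := (hu b).2 hb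
        nlinarith
    · rw [dist_comm, dist_eq_norm]
      have hyu : y - u = ∑ b, ((if s b = true then Pb Bl b u else (1 - δ) • Pb Bl b u)
          - Pb Bl b u) := by
        have h1 : y = ∑ b, (if s b = true then Pb Bl b u else (1 - δ) • Pb Bl b u) := by
          rw [hy, glue]
          refine Finset.sum_congr rfl fun b _ => ?_
          split
          · rw [Pb_Pb, if_pos rfl]
          · rw [Pb_smul, Pb_Pb, if_pos rfl]
        rw [h1]
        conv_rhs => rw [Finset.sum_sub_distrib]
        rw [Pb_sum]
      have hbound : ‖y - u‖ ≤ δ * S := by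
        rw [hyu]
        calc ‖∑ b, ((if s b = true then Pb Bl b u else (1 - δ) • Pb Bl b u) - Pb Bl b u)‖
            ≤ ∑ b, ‖(if s b = true then Pb Bl b u else (1 - δ) • Pb Bl b u) - Pb Bl b u‖ :=
              norm_sum_le _ _
          _ ≤ ∑ b, δ * ‖Pb Bl b u‖ := by
              refine Finset.sum_le_sum fun b _ => ?_
              split
              · rw [sub_self, norm_zero]; positivity
              · have : (1 - δ) • Pb Bl b u - Pb Bl b u = (-δ) • Pb Bl b u := by
                  rw [sub_smul, one_smul, neg_smul]
                  abel
                rw [this, norm_smul, Real.norm_eq_abs, abs_neg, abs_of_pos hδpos]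
          _ = δ * S := by rw [hS, Finset.mul_sum]
      have hlt : δ * S < ε := by
        have h2 : δ ≤ ε / (S + 1) := min_le_right _ _
        have h3 : δ * S ≤ ε / (S + 1) * S := mul_le_mul_of_nonneg_right h2 hS0
        have h4 : ε / (S + 1) * S < ε := by
          rw [div_mul_eq_mul_div, div_lt_iff₀ (by positivity)]
          nlinarith
        linarith
      linarith


/-! #### Subdifferential and conjugate of the `l12` norm -/

def Rf {N K : ℕ} (Bl : Fin N → Fin K) : EuclideanSpace ℝ (Fin N) → EReal :=
  fun x => ((l12Norm Bl x : ℝ) : EReal)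

lemma mem_subdiff_iff (x u : EuclideanSpace ℝ (Fin N)) :
    u ∈ subdiff (Rf Bl) x ↔ ∀ y, l12Norm Bl x + (inner ℝ u (y - x) : ℝ) ≤ l12Norm Bl y := by
  simp only [subdiff, mem_setOf_eq, Rf, ← EReal.coe_add, EReal.coe_le_coe_iff]

lemma subdiff_R_eq (x : EuclideanSpace ℝ (Fin N)) : subdiff (Rf Bl) x =
    {u | ∀ b, (Pb Bl b x = 0 → ‖Pb Bl b u‖ ≤ 1) ∧
      (Pb Bl b x ≠ 0 → Pb Bl b u = ‖Pb Bl b x‖⁻¹ • Pb Bl b x)} := by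
  ext u
  rw [mem_subdiff_iff, mem_setOf_eq]
  constructor
  · intro h
    have hx0 : l12Norm Bl x ≤ (inner ℝ u x : ℝ) := by
      have h0 := h 0
      rw [l12_zero, zero_sub, inner_neg_right] at h0
      linarith
    have hx1 : (inner ℝ u x : ℝ) ≤ l12Norm Bl x := by
      have h2 := h (x + x)
      rw [add_sub_cancel_right, ← two_smul ℝ x, l12_smul Bl 2 (by norm_num)] at h2
      linarith
    have hEq : (inner ℝ u x : ℝ) = l12Norm Bl x := le_antisymm hx1 hx0
    have hy : ∀ y, (inner ℝ u y : ℝ) ≤ l12Norm Bl y := by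
      intro y
      have := h y
      rw [inner_sub_right] at this
      linarith
    have hub : ∀ b, ‖Pb Bl b u‖ ≤ 1 := by
      intro b
      have h1 := hy (Pb Bl b u)
      rw [l12_Pb, inner_Pb_right, real_inner_self_eq_norm_sq] at h1
      nlinarith [norm_nonneg (Pb Bl b u)]
    have hterm : ∀ b ∈ Finset.univ, (0:ℝ) ≤ ‖Pb Bl b x‖ - inner ℝ (Pb Bl b u) (Pb Bl b x) := by
      intro b _
      have hcs := real_inner_le_norm (Pb Bl b u) (Pb Bl b x)
      have := mul_le_mul_of_nonneg_right (hub b) (norm_nonneg (Pb Bl b x))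
      rw [one_mul] at this
      linarith
    have hsum : ∑ b, (‖Pb Bl b x‖ - (inner ℝ (Pb Bl b u) (Pb Bl b x) : ℝ)) = 0 := by
      rw [Finset.sum_sub_distrib, ← l12_eq, ← inner_blocks, hEq, sub_self]
    have hzero := (Finset.sum_eq_zero_iff_of_nonneg hterm).mp hsum
    intro b
    refine ⟨fun _ => hub b, fun hb0 => ?_⟩
    have hib : (inner ℝ (Pb Bl b u) (Pb Bl b x) : ℝ) = ‖Pb Bl b x‖ := by
      have := hzero b (Finset.mem_univ b)
      linarith
    have hn : (0:ℝ) < ‖Pb Bl b x‖ := norm_pos_iff.mpr hb0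
    have h1 : ‖Pb Bl b u‖ = 1 := by
      have hcs := real_inner_le_norm (Pb Bl b u) (Pb Bl b x)
      rw [hib] at hcs
      have : 1 ≤ ‖Pb Bl b u‖ := by
        by_contra hlt
        push_neg at hlt
        nlinarith
      linarith [hub b]
    have heqn : (inner ℝ (Pb Bl b u) (Pb Bl b x) : ℝ) = ‖Pb Bl b u‖ * ‖Pb Bl b x‖ := by
      rw [hib, h1, one_mul]
    have hsm := inner_eq_norm_mul_iff_real.mp heqn
    rw [h1, one_smul] at hsm
    calc Pb Bl b u = ‖Pb Bl b x‖⁻¹ • (‖Pb Bl b x‖ • Pb Bl b u) :=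
          (inv_smul_smul₀ (ne_of_gt hn) _).symm
      _ = ‖Pb Bl b x‖⁻¹ • Pb Bl b x := by rw [hsm]
  · intro hu y
    have hub : ∀ b, ‖Pb Bl b u‖ ≤ 1 := by
      intro b
      by_cases hb0 : Pb Bl b x = 0
      · exact (hu b).1 hb0
      · rw [(hu b).2 hb0, norm_smul, norm_inv, norm_norm,
          inv_mul_cancel₀ (ne_of_gt (norm_pos_iff.mpr hb0))]
    have hux : (inner ℝ u x : ℝ) = l12Norm Bl x := by
      rw [inner_blocks, l12_eq]
      refine Finset.sum_congr rfl fun b _ => ?_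
      by_cases hb0 : Pb Bl b x = 0
      · rw [hb0, inner_zero_right, norm_zero]
      · rw [(hu b).2 hb0, real_inner_smul_left, real_inner_self_eq_norm_sq]
        have hn : (0:ℝ) < ‖Pb Bl b x‖ := norm_pos_iff.mpr hb0
        field_simp
    have hiy : (inner ℝ u y : ℝ) ≤ l12Norm Bl y := inner_le_l12 Bl u y hub
    rw [inner_sub_right]
    linarith

lemma fenchel_Rf (u : EuclideanSpace ℝ (Fin N)) :
    fenchel (Rf Bl) u = ⨆ x, (((inner ℝ u x : ℝ) - l12Norm Bl x : ℝ) : EReal) := by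
  simp only [fenchel, Rf, EReal.coe_sub]

lemma fenchel_Rf_ball (u : EuclideanSpace ℝ (Fin N)) (h : ∀ b, ‖Pb Bl b u‖ ≤ 1) :
    fenchel (Rf Bl) u = 0 := by
  rw [fenchel_Rf]
  apply le_antisymm
  · refine iSup_le fun x => ?_
    have := inner_le_l12 Bl u x h
    exact_mod_cast sub_nonpos.mpr this
  · have h0 := le_iSup (fun x => (((inner ℝ u x : ℝ) - l12Norm Bl x : ℝ) : EReal)) 0
    simpa [l12_zero] using h0

lemma fenchel_Rf_top (u : EuclideanSpace ℝ (Fin N)) (h : ¬ ∀ b, ‖Pb Bl b u‖ ≤ 1) :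
    fenchel (Rf Bl) u = ⊤ := by
  push_neg at h
  obtain ⟨b, hb⟩ := h
  rw [fenchel_Rf, EReal.eq_top_iff_forall_lt]
  intro r
  set δ : ℝ := ‖Pb Bl b u‖ * (‖Pb Bl b u‖ - 1) with hδ
  have hδpos : 0 < δ := mul_pos (by linarith) (by linarith)
  set t : ℝ := (|r| + 1) / δ with ht
  have htpos : 0 < t := div_pos (by positivity) hδpos
  have hval : (inner ℝ u (t • Pb Bl b u) : ℝ) - l12Norm Bl (t • Pb Bl b u) = t * δ := by
    rw [real_inner_smul_right, l12_smul Bl t htpos.le, l12_Pb, inner_Pb_right,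
      real_inner_self_eq_norm_sq]
    ring
  refine lt_of_lt_of_le ?_ (le_iSup _ (t • Pb Bl b u))
  rw [hval]
  have : t * δ = |r| + 1 := div_mul_cancel₀ _ (ne_of_gt hδpos)
  rw [this]
  exact_mod_cast lt_of_le_of_lt (le_abs_self r) (by linarith)

lemma subdiff_fenchel_empty (u : EuclideanSpace ℝ (Fin N)) (h : ¬ ∀ b, ‖Pb Bl b u‖ ≤ 1) :
    subdiff (fenchel (Rf Bl)) u = ∅ := by
  ext x
  simp only [subdiff, mem_setOf_eq, mem_empty_iff_false, iff_false]
  intro hx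
  have h0 := hx 0
  rw [fenchel_Rf_top Bl u h, fenchel_Rf_ball Bl 0 (fun b => by rw [Pb_zero, norm_zero]; norm_num),
    EReal.top_add_coe] at h0
  simp at h0

lemma mem_subdiff_fenchel_iff (u x : EuclideanSpace ℝ (Fin N)) (hu : ∀ b, ‖Pb Bl b u‖ ≤ 1) :
    x ∈ subdiff (fenchel (Rf Bl)) u ↔
      ∀ y : EuclideanSpace ℝ (Fin N), (∀ b, ‖Pb Bl b y‖ ≤ 1) → (inner ℝ x (y - u) : ℝ) ≤ 0 := by
  simp only [subdiff, mem_setOf_eq]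
  rw [fenchel_Rf_ball Bl u hu]
  constructor
  · intro h y hy
    have := h y
    rw [fenchel_Rf_ball Bl y hy, zero_add] at this
    exact_mod_cast this
  · intro h y
    by_cases hy : ∀ b, ‖Pb Bl b y‖ ≤ 1
    · rw [fenchel_Rf_ball Bl y hy, zero_add]
      exact_mod_cast h y hy
    · rw [fenchel_Rf_top Bl y hy]
      exact le_top

lemma subdiff_fenchel_eq (u : EuclideanSpace ℝ (Fin N)) (hu : ∀ b, ‖Pb Bl b u‖ ≤ 1) :
    subdiff (fenchel (Rf Bl)) u =
      {x | ∀ b, (‖Pb Bl b u‖ < 1 → Pb Bl b x = 0) ∧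
        (‖Pb Bl b u‖ = 1 → ∃ t : ℝ, 0 ≤ t ∧ Pb Bl b x = t • Pb Bl b u)} := by
  ext x
  rw [mem_subdiff_fenchel_iff Bl u x hu, mem_setOf_eq]
  constructor
  · intro h b
    constructor
    · intro hb
      set ε : ℝ := (1 - ‖Pb Bl b u‖) / (‖Pb Bl b x‖ + 1) with hε
      have hεpos : 0 < ε := div_pos (by linarith) (by positivity)
      have hy : ∀ b', ‖Pb Bl b' (u + ε • Pb Bl b x)‖ ≤ 1 := by
        intro b'
        rw [Pb_add, Pb_smul, Pb_Pb]
        by_cases hbb : b' = b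
        · rw [if_pos hbb, hbb]
          calc ‖Pb Bl b u + ε • Pb Bl b x‖ ≤ ‖Pb Bl b u‖ + ‖ε • Pb Bl b x‖ := norm_add_le _ _
            _ = ‖Pb Bl b u‖ + ε * ‖Pb Bl b x‖ := by
                rw [norm_smul, Real.norm_eq_abs, abs_of_pos hεpos]
            _ ≤ 1 := by
                rw [hε]
                have hx1 : (1 - ‖Pb Bl b u‖) / (‖Pb Bl b x‖ + 1) * ‖Pb Bl b x‖
                    ≤ (1 - ‖Pb Bl b u‖) := by
                  rw [div_mul_eq_mul_div, div_le_iff₀ (by positivity)]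
                  nlinarith [norm_nonneg (Pb Bl b x), hb]
                linarith
        · rw [if_neg hbb, smul_zero, add_zero]
          exact hu b'
      have h1 := h _ hy
      rw [add_sub_cancel_left, real_inner_smul_right, inner_Pb_right,
        real_inner_self_eq_norm_sq] at h1
      by_contra h0
      have hpos : 0 < ‖Pb Bl b x‖ := norm_pos_iff.mpr h0
      nlinarith [pow_pos hpos 2]
    · intro hb
      by_cases hx0 : Pb Bl b x = 0
      · exact ⟨0, le_refl 0, by rw [hx0, zero_smul]⟩
      have hxn : (0:ℝ) < ‖Pb Bl b x‖ := norm_pos_iff.mpr hx0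
      have hy : ∀ b', ‖Pb Bl b' (u - Pb Bl b u + ‖Pb Bl b x‖⁻¹ • Pb Bl b x)‖ ≤ 1 := by
        intro b'
        rw [Pb_add, Pb_sub, Pb_Pb, Pb_smul, Pb_Pb]
        by_cases hbb : b' = b
        · subst hbb
          rw [if_pos rfl, if_pos rfl, sub_self, zero_add, norm_smul, norm_inv, norm_norm,
            inv_mul_cancel₀ (ne_of_gt hxn)]
        · rw [if_neg hbb, if_neg hbb, sub_zero, smul_zero, add_zero]
          exact hu b'
      have h1 := h _ hy
      have hre : (u - Pb Bl b u + ‖Pb Bl b x‖⁻¹ • Pb Bl b x) - u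
          = ‖Pb Bl b x‖⁻¹ • Pb Bl b x - Pb Bl b u := by abel
      rw [hre, inner_sub_right, real_inner_smul_right, inner_Pb_right Bl b x x,
        inner_Pb_right Bl b x u, real_inner_self_eq_norm_sq] at h1
      have h2 : ‖Pb Bl b x‖ ≤ (inner ℝ (Pb Bl b x) (Pb Bl b u) : ℝ) := by
        have : ‖Pb Bl b x‖⁻¹ * ‖Pb Bl b x‖ ^ 2 = ‖Pb Bl b x‖ := by field_simp
        linarith [this ▸ h1]
      have hcs : (inner ℝ (Pb Bl b x) (Pb Bl b u) : ℝ) ≤ ‖Pb Bl b x‖ * ‖Pb Bl b u‖ :=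
        real_inner_le_norm _ _
      have heq : (inner ℝ (Pb Bl b x) (Pb Bl b u) : ℝ) = ‖Pb Bl b x‖ * ‖Pb Bl b u‖ := by
        rw [hb, mul_one]
        rw [hb, mul_one] at hcs
        linarith
      have hsm := inner_eq_norm_mul_iff_real.mp heq
      rw [hb, one_smul] at hsm
      exact ⟨‖Pb Bl b x‖, norm_nonneg _, hsm⟩
  · intro hx y hy
    rw [inner_sub_right, sub_nonpos, inner_blocks Bl x y, inner_blocks Bl x u]
    refine Finset.sum_le_sum fun b _ => ?_
    rcases lt_or_eq_of_le (hu b) with hb | hb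
    · rw [(hx b).1 hb]
      simp
    · obtain ⟨t, ht0, htx⟩ := (hx b).2 hb
      rw [htx]
      rw [real_inner_smul_left, real_inner_smul_left, real_inner_self_eq_norm_sq, hb, one_pow]
      have : (inner ℝ (Pb Bl b u) (Pb Bl b y) : ℝ) ≤ 1 := by
        calc (inner ℝ (Pb Bl b u) (Pb Bl b y) : ℝ) ≤ ‖Pb Bl b u‖ * ‖Pb Bl b y‖ :=
              real_inner_le_norm _ _
          _ ≤ 1 := by rw [hb, one_mul]; exact hy b
      nlinarith

lemma ri_primal (x : EuclideanSpace ℝ (Fin N)) :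
    intrinsicInterior ℝ {u : EuclideanSpace ℝ (Fin N) | ∀ b,
        (Pb Bl b x = 0 → ‖Pb Bl b u‖ ≤ 1) ∧
        (Pb Bl b x ≠ 0 → Pb Bl b u = ‖Pb Bl b x‖⁻¹ • Pb Bl b x)} =
      {u | ∀ b, (Pb Bl b x = 0 → ‖Pb Bl b u‖ < 1) ∧
        (Pb Bl b x ≠ 0 → Pb Bl b u = ‖Pb Bl b x‖⁻¹ • Pb Bl b x)} := by
  set s : Set (EuclideanSpace ℝ (Fin N)) := {u | ∀ b,
        (Pb Bl b x = 0 → ‖Pb Bl b u‖ ≤ 1) ∧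
        (Pb Bl b x ≠ 0 → Pb Bl b u = ‖Pb Bl b x‖⁻¹ • Pb Bl b x)} with hs
  refine ri_eq' {u | ∀ b, Pb Bl b x = 0 → ‖Pb Bl b u‖ < 1} ?_ ?_ ?_ ?_ ?_
  · -- open
    have : {u : EuclideanSpace ℝ (Fin N) | ∀ b, Pb Bl b x = 0 → ‖Pb Bl b u‖ < 1}
        = ⋂ b, {u | Pb Bl b x = 0 → ‖Pb Bl b u‖ < 1} := by
      ext u; simp
    rw [this]
    refine isOpen_iInter_of_finite fun b => ?_
    by_cases hb : Pb Bl b x = 0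
    · have : {u : EuclideanSpace ℝ (Fin N) | Pb Bl b x = 0 → ‖Pb Bl b u‖ < 1}
          = (fun u => ‖Pb Bl b u‖) ⁻¹' (Iio 1) := by
        ext u; simp [hb]
      rw [this]
      exact (((continuous_Pb Bl b).norm)).isOpen_preimage _ isOpen_Iio
    · have : {u : EuclideanSpace ℝ (Fin N) | Pb Bl b x = 0 → ‖Pb Bl b u‖ < 1} = univ := by
        ext u; simp [hb]
      rw [this]; exact isOpen_univ
  · -- t ⊆ s
    intro u hu
    exact fun b => ⟨fun h => le_of_lt ((hu b).1 h), (hu b).2⟩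
  · -- t ⊆ U
    intro u hu b hb
    exact (hu b).1 hb
  · -- U ∩ affineSpan ⊆ t
    intro u hU hA
    have hp : ∀ b, Pb Bl b x ≠ 0 → Pb Bl b u = ‖Pb Bl b x‖⁻¹ • Pb Bl b x := by
      have : ∀ w ∈ affineSpan ℝ s, ∀ b, Pb Bl b x ≠ 0 →
          Pb Bl b w = ‖Pb Bl b x‖⁻¹ • Pb Bl b x := by
        intro w hw
        refine affineSpan_induction (p := fun w => ∀ b, Pb Bl b x ≠ 0 → Pb Bl b w = ‖Pb Bl b x‖⁻¹ • Pb Bl b x) hw ?_ ?_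
        · intro y hy b hb; exact (hy b).2 hb
        · intro c p q r hp hq hr b hb
          simp only [vsub_eq_sub, vadd_eq_add, Pb_add, Pb_smul, Pb_sub, hp b hb, hq b hb,
            hr b hb, sub_self, smul_zero, zero_add]
      exact this u hA
    exact fun b => ⟨fun hb => hU b hb, fun hb => hp b hb⟩
  · -- escape
    intro w hw hwt ε hε
    have : ∃ b, Pb Bl b x = 0 ∧ ‖Pb Bl b w‖ = 1 := by
      by_contra hc
      push_neg at hc
      apply hwt
      intro b
      refine ⟨fun hb => ?_, fun hb => (hw b).2 hb⟩
      exact lt_of_le_of_ne ((hw b).1 hb) (hc b hb)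
    obtain ⟨b, hbx, hbw⟩ := this
    set v : EuclideanSpace ℝ (Fin N) := w - Pb Bl b w with hv
    have hvs : v ∈ s := by
      intro b'
      constructor
      · intro hb'
        by_cases hbb : b' = b
        · subst hbb
          rw [hv, Pb_sub, Pb_Pb, if_pos rfl, sub_self, norm_zero]
          norm_num
        · rw [hv, Pb_sub, Pb_Pb, if_neg hbb, sub_zero]
          exact (hw b').1 hb'
      · intro hb'
        by_cases hbb : b' = b
        · subst hbb; exact absurd hbx hb'
        · rw [hv, Pb_sub, Pb_Pb, if_neg hbb, sub_zero]
          exact (hw b').2 hb'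
    refine ⟨w + (ε/2) • Pb Bl b w, ?_, ?_, ?_⟩
    · have h1 : w + (ε/2) • Pb Bl b w = (ε/2) • (w -ᵥ v) +ᵥ w := by
        rw [hv, vsub_eq_sub, vadd_eq_add, sub_sub_cancel]
        abel
      rw [h1]
      exact AffineSubspace.smul_vsub_vadd_mem _ _ (subset_affineSpan ℝ s hw)
        (subset_affineSpan ℝ s hvs) (subset_affineSpan ℝ s hw)
    · intro hmem
      have := (hmem b).1 hbx
      rw [Pb_add, Pb_smul, Pb_Pb, if_pos rfl] at this
      have hnorm : ‖Pb Bl b w + (ε/2) • Pb Bl b w‖ = 1 + ε/2 := by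
        have : Pb Bl b w + (ε/2) • Pb Bl b w = (1 + ε/2) • Pb Bl b w := by
          rw [add_smul, one_smul]
        rw [this, norm_smul, Real.norm_eq_abs, abs_of_pos (by linarith), hbw, mul_one]
      rw [hnorm] at this
      linarith
    · rw [dist_eq_norm, add_sub_cancel_left, norm_smul, Real.norm_eq_abs,
        abs_of_pos (by linarith : (0:ℝ) < ε/2), hbw, mul_one]
      linarith

lemma ri_dual (u : EuclideanSpace ℝ (Fin N)) (hu : ∀ b, ‖Pb Bl b u‖ ≤ 1) :
    intrinsicInterior ℝ {x : EuclideanSpace ℝ (Fin N) | ∀ b,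
        (‖Pb Bl b u‖ < 1 → Pb Bl b x = 0) ∧
        (‖Pb Bl b u‖ = 1 → ∃ t : ℝ, 0 ≤ t ∧ Pb Bl b x = t • Pb Bl b u)} =
      {x | ∀ b, (‖Pb Bl b u‖ < 1 → Pb Bl b x = 0) ∧
        (‖Pb Bl b u‖ = 1 → ∃ t : ℝ, 0 < t ∧ Pb Bl b x = t • Pb Bl b u)} := by
  set s : Set (EuclideanSpace ℝ (Fin N)) := {x | ∀ b,
        (‖Pb Bl b u‖ < 1 → Pb Bl b x = 0) ∧
        (‖Pb Bl b u‖ = 1 → ∃ t : ℝ, 0 ≤ t ∧ Pb Bl b x = t • Pb Bl b u)} with hs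
  refine ri_eq' {x | ∀ b, ‖Pb Bl b u‖ = 1 → 0 < (inner ℝ x (Pb Bl b u) : ℝ)} ?_ ?_ ?_ ?_ ?_
  · have : {x : EuclideanSpace ℝ (Fin N) | ∀ b, ‖Pb Bl b u‖ = 1 → 0 < (inner ℝ x (Pb Bl b u) : ℝ)}
        = ⋂ b, {x | ‖Pb Bl b u‖ = 1 → 0 < (inner ℝ x (Pb Bl b u) : ℝ)} := by
      ext x; simp
    rw [this]
    refine isOpen_iInter_of_finite fun b => ?_
    by_cases hb : ‖Pb Bl b u‖ = 1
    · have : {x : EuclideanSpace ℝ (Fin N) | ‖Pb Bl b u‖ = 1 → 0 < (inner ℝ x (Pb Bl b u) : ℝ)}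
          = (fun x : EuclideanSpace ℝ (Fin N) => (inner ℝ x (Pb Bl b u) : ℝ)) ⁻¹' (Ioi 0) := by
        ext x; simp [hb]
      rw [this]
      exact (continuous_id.inner continuous_const).isOpen_preimage _ isOpen_Ioi
    · have : {x : EuclideanSpace ℝ (Fin N) | ‖Pb Bl b u‖ = 1 → 0 < (inner ℝ x (Pb Bl b u) : ℝ)}
          = univ := by
        ext x; simp [hb]
      rw [this]; exact isOpen_univ
  · intro x hx b
    refine ⟨(hx b).1, fun hb => ?_⟩
    obtain ⟨t, ht, htx⟩ := (hx b).2 hb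
    exact ⟨t, le_of_lt ht, htx⟩
  · intro x hx b hb
    obtain ⟨t, ht, htx⟩ := (hx b).2 hb
    rw [inner_Pb_right, htx, real_inner_smul_left, real_inner_self_eq_norm_sq, hb, one_pow,
      mul_one]
    exact ht
  · intro x hU hA
    have hp : ∀ b, (‖Pb Bl b u‖ < 1 → Pb Bl b x = 0) ∧
        (‖Pb Bl b u‖ = 1 → ∃ t : ℝ, Pb Bl b x = t • Pb Bl b u) := by
      have key : ∀ w ∈ affineSpan ℝ s, ∀ b, (‖Pb Bl b u‖ < 1 → Pb Bl b w = 0) ∧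
          (‖Pb Bl b u‖ = 1 → ∃ t : ℝ, Pb Bl b w = t • Pb Bl b u) := by
        intro w hw
        refine affineSpan_induction (p := fun w => ∀ b, (‖Pb Bl b u‖ < 1 → Pb Bl b w = 0) ∧
          (‖Pb Bl b u‖ = 1 → ∃ t : ℝ, Pb Bl b w = t • Pb Bl b u)) hw ?_ ?_
        · intro y hy b
          refine ⟨(hy b).1, fun hb => ?_⟩
          obtain ⟨t, _, htx⟩ := (hy b).2 hb
          exact ⟨t, htx⟩
        · intro c p q r hp hq hr b
          constructor
          · intro hb
            simp only [vsub_eq_sub, vadd_eq_add, Pb_add, Pb_smul, Pb_sub, (hp b).1 hb,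
              (hq b).1 hb, (hr b).1 hb, sub_self, smul_zero, zero_add]
          · intro hb
            obtain ⟨t1, h1⟩ := (hp b).2 hb
            obtain ⟨t2, h2⟩ := (hq b).2 hb
            obtain ⟨t3, h3⟩ := (hr b).2 hb
            refine ⟨c * (t1 - t2) + t3, ?_⟩
            simp only [vsub_eq_sub, vadd_eq_add, Pb_add, Pb_smul, Pb_sub, h1, h2, h3,
              ← sub_smul, smul_smul, ← add_smul]
      exact key x hA
    intro b
    refine ⟨(hp b).1, fun hb => ?_⟩
    obtain ⟨t, htx⟩ := (hp b).2 hb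
    refine ⟨t, ?_, htx⟩
    have := hU b hb
    rw [inner_Pb_right, htx, real_inner_smul_left, real_inner_self_eq_norm_sq, hb, one_pow,
      mul_one] at this
    exact this
  · intro w hw hwt ε hε
    have hex : ∃ b, ‖Pb Bl b u‖ = 1 ∧ Pb Bl b w = 0 := by
      by_contra hc
      push_neg at hc
      apply hwt
      intro b
      refine ⟨(hw b).1, fun hb => ?_⟩
      obtain ⟨t, ht, htx⟩ := (hw b).2 hb
      have hwb := hc b hb
      rcases lt_or_eq_of_le ht with h | h
      · exact ⟨t, h, htx⟩
      · exfalso; apply hwb; rw [htx, ← h, zero_smul]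
    obtain ⟨b, hb1, hbw⟩ := hex
    have hub0 : Pb Bl b u ≠ 0 := fun h => by rw [h, norm_zero] at hb1; norm_num at hb1
    set v : EuclideanSpace ℝ (Fin N) := w + Pb Bl b u with hv
    have hvs : v ∈ s := by
      intro b'
      constructor
      · intro hb'
        by_cases hbb : b' = b
        · subst hbb; rw [hb1] at hb'; norm_num at hb'
        · rw [hv, Pb_add, Pb_Pb, if_neg hbb, add_zero]
          exact (hw b').1 hb'
      · intro hb'
        by_cases hbb : b' = b
        · subst hbb
          rw [hv, Pb_add, Pb_Pb, if_pos rfl, hbw, zero_add]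
          exact ⟨1, by norm_num, (one_smul ℝ _).symm⟩
        · rw [hv, Pb_add, Pb_Pb, if_neg hbb, add_zero]
          exact (hw b').2 hb'
    refine ⟨w - (ε/2) • Pb Bl b u, ?_, ?_, ?_⟩
    · have h1 : w - (ε/2) • Pb Bl b u = (ε/2) • (w -ᵥ v) +ᵥ w := by
        rw [hv, vsub_eq_sub, vadd_eq_add]
        have h2 : w - (w + Pb Bl b u) = -Pb Bl b u := by abel
        rw [h2, smul_neg]
        abel
      rw [h1]
      exact AffineSubspace.smul_vsub_vadd_mem _ _ (subset_affineSpan ℝ s hw)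
        (subset_affineSpan ℝ s hvs) (subset_affineSpan ℝ s hw)
    · intro hmem
      obtain ⟨t, ht, htx⟩ := (hmem b).2 hb1
      rw [Pb_sub, Pb_smul, Pb_Pb, if_pos rfl, hbw, zero_sub] at htx
      have : -(ε/2) = t := by
        have h2 := congrArg (fun z => (inner ℝ z (Pb Bl b u) : ℝ)) htx
        simp only [inner_neg_left, real_inner_smul_left, real_inner_self_eq_norm_sq, hb1,
          one_pow, mul_one] at h2
        exact h2
      linarith
    · have h3 : w - (ε/2) • Pb Bl b u - w = -((ε/2) • Pb Bl b u) := by abel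
      rw [dist_eq_norm, h3, norm_neg, norm_smul, Real.norm_eq_abs,
        abs_of_pos (by linarith : (0:ℝ) < ε/2), hb1, mul_one]
      linarith

/-! #### Correspondence operator on strata -/

lemma norm_inv_smul_self {x : EuclideanSpace ℝ (Fin N)} (hx : x ≠ 0) :
    ‖(‖x‖⁻¹ • x : EuclideanSpace ℝ (Fin N))‖ = 1 := by
  rw [norm_smul, norm_inv, norm_norm, inv_mul_cancel₀ (ne_of_gt (norm_pos_iff.mpr hx))]

lemma corrOp_StratP (s : Fin K → Bool) :
    corrOp (Rf Bl) (StratP Bl s) = StratD Bl s := by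
  ext u
  simp only [corrOp, mem_iUnion, exists_prop]
  constructor
  · rintro ⟨x, hx, hu⟩
    rw [subdiff_R_eq Bl x, ri_primal Bl x] at hu
    intro b
    constructor
    · intro hb
      have hxb := (hx b).1 hb
      rw [(hu b).2 hxb]
      exact norm_inv_smul_self hxb
    · intro hb
      exact (hu b).1 ((hx b).2 hb)
  · intro hu
    set x : EuclideanSpace ℝ (Fin N) :=
      glue Bl (fun b => if s b = true then Pb Bl b u else 0) with hxdef
    have hPbx : ∀ b, Pb Bl b x = if s b = true then Pb Bl b u else 0 := by
      intro b
      rw [hxdef, Pb_glue]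
      split
      · rw [Pb_Pb, if_pos rfl]
      · rw [Pb_zero]
    have hune : ∀ b, s b = true → Pb Bl b u ≠ 0 := by
      intro b hb h0
      have := (hu b).1 hb
      rw [h0, norm_zero] at this
      norm_num at this
    refine ⟨x, ?_, ?_⟩
    · intro b
      constructor
      · intro hb
        rw [hPbx, if_pos hb]
        exact hune b hb
      · intro hb
        rw [hPbx, if_neg (by rw [hb]; simp)]
    · rw [subdiff_R_eq Bl x, ri_primal Bl x]
      intro b
      constructor
      · intro hb0
        cases hs : s b
        · exact (hu b).2 hs
        · exfalso
          rw [hPbx, if_pos hs] at hb0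
          exact hune b hs hb0
      · intro hb0
        cases hs : s b
        · exfalso
          apply hb0
          rw [hPbx, if_neg (by rw [hs]; simp)]
        · rw [hPbx, if_pos hs] at hb0 ⊢
          rw [(hu b).1 hs, inv_one, one_smul]

lemma corrOp_StratD (s : Fin K → Bool) :
    corrOp (fenchel (Rf Bl)) (StratD Bl s) = StratP Bl s := by
  ext x
  simp only [corrOp, mem_iUnion, exists_prop]
  constructor
  · rintro ⟨u, hu, hx⟩
    have hub : ∀ b, ‖Pb Bl b u‖ ≤ 1 := by
      intro b
      cases hs : s b
      · exact le_of_lt ((hu b).2 hs)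
      · exact le_of_eq ((hu b).1 hs)
    rw [subdiff_fenchel_eq Bl u hub, ri_dual Bl u hub] at hx
    intro b
    constructor
    · intro hb
      have h1 := (hu b).1 hb
      obtain ⟨t, ht, htx⟩ := (hx b).2 h1
      rw [htx]
      refine smul_ne_zero (ne_of_gt ht) ?_
      intro h0
      rw [h0, norm_zero] at h1
      norm_num at h1
    · intro hb
      exact (hx b).1 ((hu b).2 hb)
  · intro hx
    set u : EuclideanSpace ℝ (Fin N) :=
      glue Bl (fun b => if s b = true then ‖Pb Bl b x‖⁻¹ • Pb Bl b x else 0) with hudef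
    have hPbu : ∀ b, Pb Bl b u = if s b = true then ‖Pb Bl b x‖⁻¹ • Pb Bl b x else 0 := by
      intro b
      rw [hudef, Pb_glue]
      split
      · rw [Pb_smul, Pb_Pb, if_pos rfl]
      · rw [Pb_zero]
    have huD : u ∈ StratD Bl s := by
      intro b
      constructor
      · intro hb
        rw [hPbu, if_pos hb]
        exact norm_inv_smul_self ((hx b).1 hb)
      · intro hb
        rw [hPbu, if_neg (by rw [hb]; simp), norm_zero]
        norm_num
    have hub : ∀ b, ‖Pb Bl b u‖ ≤ 1 := by
      intro b
      cases hs : s b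
      · exact le_of_lt ((huD b).2 hs)
      · exact le_of_eq ((huD b).1 hs)
    refine ⟨u, huD, ?_⟩
    rw [subdiff_fenchel_eq Bl u hub, ri_dual Bl u hub]
    intro b
    constructor
    · intro hb
      cases hs : s b
      · exact (hx b).2 hs
      · exfalso
        rw [(huD b).1 hs] at hb
        exact lt_irrefl 1 hb
    · intro hb
      cases hs : s b
      · exfalso
        have := (huD b).2 hs
        rw [hb] at this
        exact lt_irrefl 1 this
      · have hxb := (hx b).1 hs
        refine ⟨‖Pb Bl b x‖, norm_pos_iff.mpr hxb, ?_⟩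
        rw [hPbu, if_pos hs, smul_inv_smul₀ (ne_of_gt (norm_pos_iff.mpr hxb))]

/-! #### Domains -/

lemma domSubdiff_Rf : domSubdiff (Rf Bl) = univ := by
  ext x
  simp only [domSubdiff, mem_setOf_eq, mem_univ, iff_true]
  refine ⟨glue Bl (fun b => if Pb Bl b x = 0 then 0 else ‖Pb Bl b x‖⁻¹ • Pb Bl b x), ?_⟩
  rw [subdiff_R_eq Bl x]
  intro b
  have hPbu : Pb Bl b (glue Bl (fun b => if Pb Bl b x = 0 then 0
      else ‖Pb Bl b x‖⁻¹ • Pb Bl b x)) =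
      if Pb Bl b x = 0 then 0 else ‖Pb Bl b x‖⁻¹ • Pb Bl b x := by
    rw [Pb_glue]
    split
    · rw [Pb_zero]
    · rw [Pb_smul, Pb_Pb, if_pos rfl]
  constructor
  · intro hb
    rw [hPbu, if_pos hb, norm_zero]
    norm_num
  · intro hb
    rw [hPbu, if_neg hb]

lemma domSubdiff_fenchel_Rf :
    domSubdiff (fenchel (Rf Bl)) = {u | ∀ b, ‖Pb Bl b u‖ ≤ 1} := by
  ext u
  simp only [domSubdiff, mem_setOf_eq]
  constructor
  · intro ⟨x, hx⟩
    by_contra hc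
    rw [subdiff_fenchel_empty Bl u hc] at hx
    exact hx
  · intro hu
    refine ⟨0, ?_⟩
    rw [subdiff_fenchel_eq Bl u hu]
    intro b
    exact ⟨fun _ => Pb_zero Bl b, fun _ => ⟨0, le_refl 0, by rw [Pb_zero, zero_smul]⟩⟩

/-! #### Strata: witnesses, patterns, order -/

/-- Canonical witness with pattern `s`. -/
def wP (hBl : Function.Surjective Bl) (s : Fin K → Bool) : EuclideanSpace ℝ (Fin N) :=
  glue Bl (fun b => if s b = true then eVec Bl hBl b else 0)

lemma Pb_wP (hBl : Function.Surjective Bl) (s : Fin K → Bool) (b : Fin K) :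
    Pb Bl b (wP Bl hBl s) = if s b = true then eVec Bl hBl b else 0 := by
  rw [wP, Pb_glue]
  split
  · rw [Pb_eVec Bl hBl, if_pos rfl]
  · rw [Pb_zero]

lemma wP_mem_StratP (hBl : Function.Surjective Bl) (s : Fin K → Bool) :
    wP Bl hBl s ∈ StratP Bl s := by
  intro b
  constructor
  · intro hb
    rw [Pb_wP, if_pos hb]
    exact eVec_ne_zero Bl hBl b
  · intro hb
    rw [Pb_wP, if_neg (by rw [hb]; simp)]

lemma wP_mem_StratD (hBl : Function.Surjective Bl) (s : Fin K → Bool) :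
    wP Bl hBl s ∈ StratD Bl s := by
  intro b
  constructor
  · intro hb
    rw [Pb_wP, if_pos hb]
    exact norm_eVec Bl hBl b
  · intro hb
    rw [Pb_wP, if_neg (by rw [hb]; simp), norm_zero]
    norm_num

lemma StratP_pattern {s t : Fin K → Bool} {x : EuclideanSpace ℝ (Fin N)}
    (hs : x ∈ StratP Bl s) (ht : x ∈ StratP Bl t) : s = t := by
  funext b
  cases hsb : s b <;> cases htb : t b
  · rfl
  · exact (((ht b).1 htb) ((hs b).2 hsb)).elim
  · exact (((hs b).1 hsb) ((ht b).2 htb)).elim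
  · rfl

lemma StratD_pattern {s t : Fin K → Bool} {u : EuclideanSpace ℝ (Fin N)}
    (hs : u ∈ StratD Bl s) (ht : u ∈ StratD Bl t) : s = t := by
  funext b
  cases hsb : s b <;> cases htb : t b
  · rfl
  · have h1 := (hs b).2 hsb
    have h2 := (ht b).1 htb
    rw [h2] at h1
    exact absurd h1 (lt_irrefl 1)
  · have h1 := (ht b).2 htb
    have h2 := (hs b).1 hsb
    rw [h2] at h1
    exact absurd h1 (lt_irrefl 1)
  · rfl

lemma StratP_inj (hBl : Function.Surjective Bl) {s t : Fin K → Bool}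
    (h : StratP Bl s = StratP Bl t) : s = t :=
  StratP_pattern Bl (wP_mem_StratP Bl hBl s) (h ▸ wP_mem_StratP Bl hBl s)

lemma StratD_inj (hBl : Function.Surjective Bl) {s t : Fin K → Bool}
    (h : StratD Bl s = StratD Bl t) : s = t :=
  StratD_pattern Bl (wP_mem_StratD Bl hBl s) (h ▸ wP_mem_StratD Bl hBl s)

lemma stratLE_StratP_iff (hBl : Function.Surjective Bl) (s s' : Fin K → Bool) :
    stratLE (StratP Bl s) (StratP Bl s') ↔ ∀ b, s b = true → s' b = true := by
  unfold stratLE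
  rw [closure_StratP Bl hBl s']
  constructor
  · intro h b hb
    have hx := h (wP_mem_StratP Bl hBl s)
    by_contra hc
    have hsf : s' b = false := by
      cases hs : s' b
      · rfl
      · exact absurd hs hc
    have := hx b hsf
    rw [Pb_wP, if_pos hb] at this
    exact eVec_ne_zero Bl hBl b this
  · intro h x hx b hb
    cases hs : s b
    · exact (hx b).2 hs
    · rw [h b hs] at hb
      simp at hb

lemma stratLE_StratD_iff (hBl : Function.Surjective Bl) (s s' : Fin K → Bool) :
    stratLE (StratD Bl s') (StratD Bl s) ↔ ∀ b, s b = true → s' b = true := by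
  unfold stratLE
  rw [closure_StratD Bl s]
  constructor
  · intro h b hb
    have hx := h (wP_mem_StratD Bl hBl s')
    have h1 := (hx b).1 hb
    by_contra hc
    have hsf : s' b = false := by
      cases hs : s' b
      · rfl
      · exact absurd hs hc
    rw [Pb_wP, if_neg (by rw [hsf]; simp), norm_zero] at h1
    norm_num at h1
  · intro h u hu b
    constructor
    · intro hb
      exact (hu b).1 (h b hb)
    · intro hb
      cases hs : s' b
      · exact le_of_lt ((hu b).2 hs)
      · exact le_of_eq ((hu b).1 hs)

end Aux


/-- Section 2.3.4: the `ℓ_{1,2}` norm associated with a partition of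
`{1,…,N}` into `K` nonempty blocks is mirror-stratifiable w.r.t. the product
stratifications built from `{0}` / complement-of-`{0}` per block (primal) and unit
sphere / open unit ball per block (dual). -/
theorem l12_mirror_stratifiable {N K : ℕ} (Bl : Fin N → Fin K)
    (hBl : Function.Surjective Bl) :
    IsMirrorStratifiable (fun x : EuclideanSpace ℝ (Fin N) => ((l12Norm Bl x : ℝ) : EReal))
      (l12PrimalStrat Bl) (l12DualStrat Bl) := by
  classical
  have hRf : (fun x : EuclideanSpace ℝ (Fin N) => ((l12Norm Bl x : ℝ) : EReal)) = Rf Bl := rfl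
  rw [hRf]
  have hP : IsStratification (domSubdiff (Rf Bl)) (l12PrimalStrat Bl) := by
    rw [l12PrimalStrat_eq, domSubdiff_Rf]
    refine ⟨Set.finite_range _, ?_, ?_, ?_, ?_⟩
    · rintro M ⟨s, rfl⟩
      exact ⟨wP Bl hBl s, wP_mem_StratP Bl hBl s⟩
    · ext x
      simp only [mem_sUnion, Set.mem_range, mem_univ, iff_true]
      refine ⟨StratP Bl (fun b => decide (¬ Pb Bl b x = 0)), ⟨_, rfl⟩, ?_⟩
      intro b
      constructor
      · intro hb
        exact of_decide_eq_true hb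
      · intro hb
        exact not_not.mp (of_decide_eq_false hb)
    · rintro M ⟨s, rfl⟩ M' ⟨t, rfl⟩ hne
      rw [Set.disjoint_left]
      intro x hx hx'
      exact hne (congrArg (StratP Bl) (StratP_pattern Bl hx hx'))
    · rintro M ⟨s, rfl⟩ M' ⟨t, rfl⟩ ⟨x, hx, hxc⟩
      have hst : ∀ b, s b = true → t b = true := by
        intro b hb
        rw [closure_StratP Bl hBl t] at hxc
        by_contra hc
        have htf : t b = false := by
          cases h : t b
          · rfl
          · exact absurd h hc
        exact (hx b).1 hb (hxc b htf)
      exact (stratLE_StratP_iff Bl hBl s t).mpr hst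
  have hD : IsStratification (domSubdiff (fenchel (Rf Bl))) (l12DualStrat Bl) := by
    rw [l12DualStrat_eq, domSubdiff_fenchel_Rf]
    refine ⟨Set.finite_range _, ?_, ?_, ?_, ?_⟩
    · rintro M ⟨s, rfl⟩
      exact ⟨wP Bl hBl s, wP_mem_StratD Bl hBl s⟩
    · ext u
      simp only [mem_sUnion, Set.mem_range, mem_setOf_eq]
      constructor
      · rintro ⟨M, ⟨s, rfl⟩, hu⟩ b
        cases hs : s b
        · exact le_of_lt ((hu b).2 hs)
        · exact le_of_eq ((hu b).1 hs)
      · intro hu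
        refine ⟨StratD Bl (fun b => decide (‖Pb Bl b u‖ = 1)), ⟨_, rfl⟩, ?_⟩
        intro b
        constructor
        · intro hb
          exact of_decide_eq_true hb
        · intro hb
          exact lt_of_le_of_ne (hu b) (of_decide_eq_false hb)
    · rintro M ⟨s, rfl⟩ M' ⟨t, rfl⟩ hne
      rw [Set.disjoint_left]
      intro u hu hu'
      exact hne (congrArg (StratD Bl) (StratD_pattern Bl hu hu'))
    · rintro M ⟨s, rfl⟩ M' ⟨t, rfl⟩ ⟨u, hu, huc⟩
      have hts : ∀ b, t b = true → s b = true := by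
        intro b hb
        rw [closure_StratD Bl t] at huc
        by_contra hc
        have hsf : s b = false := by
          cases h : s b
          · rfl
          · exact absurd h hc
        have h1 := (hu b).2 hsf
        have h2 := (huc b).1 hb
        rw [h2] at h1
        exact lt_irrefl 1 h1
      exact (stratLE_StratD_iff Bl hBl t s).mpr hts
  refine ⟨hP, hD, ?_, ?_, ?_, ?_⟩
  · intro M hM
    rw [l12PrimalStrat_eq] at hM
    obtain ⟨s, rfl⟩ := hM
    rw [corrOp_StratP Bl s, l12DualStrat_eq]
    exact ⟨s, rfl⟩
  · intro Md hMd
    rw [l12DualStrat_eq] at hMd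
    obtain ⟨s, rfl⟩ := hMd
    rw [corrOp_StratD Bl s, l12PrimalStrat_eq]
    exact ⟨s, rfl⟩
  · intro M hM Md hMd
    rw [l12PrimalStrat_eq] at hM
    obtain ⟨s, rfl⟩ := hM
    rw [l12DualStrat_eq] at hMd
    obtain ⟨t, rfl⟩ := hMd
    rw [corrOp_StratP Bl s, corrOp_StratD Bl t]
    constructor
    · intro h
      rw [StratD_inj Bl hBl h]
    · intro h
      rw [StratP_inj Bl hBl h]
  · intro M hM M' hM'
    rw [l12PrimalStrat_eq] at hM hM'
    obtain ⟨s, rfl⟩ := hM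
    obtain ⟨s', rfl⟩ := hM'
    rw [corrOp_StratP Bl s, corrOp_StratP Bl s']
    rw [stratLE_StratP_iff Bl hBl s s', stratLE_StratD_iff Bl hBl s s']


end
end

section
/- The function R: ℝ → ℝ given by R(x) = |x| + x²/2, whose Fenchel conjugate is R*(u) = (max{|u| − 1, 0})²/2 and which satisfies dom(∂R) = dom(∂R*) = ℝ, is not mirror-stratifiable: there exists no pair of stratifications (𝒮, 𝒮*) of ℝ and ℝ with respect to which R is mirror-stratifiable. In particular, 𝒥_R(ℝ) = ℝ ∖ {−1, 1}, so 𝒥_R cannot map any stratification of ℝ onto a stratification (i.e. a partition) of ℝ. -/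
open Filter Topology Set Pointwise

noncomputable section

variable {E : Type*} [NormedAddCommGroup E] [InnerProductSpace ℝ E]

private lemma mem_subdiff_coe (f : ℝ → ℝ) (x u : ℝ) :
    u ∈ subdiff (fun t => ((f t : ℝ) : EReal)) x ↔ ∀ y, f x + u * (y - x) ≤ f y := by
  have hip : ∀ a b : ℝ, (inner ℝ a b : ℝ) = a * b := fun a b => by simp [real_inner_comm, mul_comm]
  simp only [subdiff, Set.mem_setOf_eq, hip, ← EReal.coe_add, EReal.coe_le_coe_iff]

private lemma subdiff_R0_pos {x : ℝ} (hx : 0 < x) :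
    subdiff (fun t => ((|t| + t ^ 2 / 2 : ℝ) : EReal)) x = {x + 1} := by
  ext u
  rw [mem_subdiff_coe (fun t => |t| + t ^ 2 / 2), Set.mem_singleton_iff]
  constructor
  · intro h
    by_contra hne
    rcases lt_or_gt_of_ne (sub_ne_zero.mpr hne) with hd | hd
    · -- u - (x+1) < 0
      set t : ℝ := max (u - (x + 1)) (-x) with ht
      have ht0 : t < 0 := by
        apply max_lt hd; linarith
      have htx : -x ≤ t := le_max_right _ _
      have htd : u - (x + 1) ≤ t := le_max_left _ _
      have h1 := h (x + t)
      rw [abs_of_pos hx, abs_of_nonneg (by linarith : (0:ℝ) ≤ x + t)] at h1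
      nlinarith [sq_nonneg t]
    · set t : ℝ := min (u - (x + 1)) x with ht
      have ht0 : 0 < t := lt_min hd hx
      have htd : t ≤ u - (x + 1) := min_le_left _ _
      have h1 := h (x + t)
      rw [abs_of_pos hx, abs_of_pos (by linarith : (0:ℝ) < x + t)] at h1
      nlinarith [sq_nonneg t]
  · rintro rfl y
    rw [abs_of_pos hx]
    rcases abs_cases y with ⟨hy, _⟩ | ⟨hy, _⟩ <;> nlinarith [sq_nonneg (y - x)]

private lemma subdiff_R0_neg {x : ℝ} (hx : x < 0) :
    subdiff (fun t => ((|t| + t ^ 2 / 2 : ℝ) : EReal)) x = {x - 1} := by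
  ext u
  rw [mem_subdiff_coe (fun t => |t| + t ^ 2 / 2), Set.mem_singleton_iff]
  constructor
  · intro h
    by_contra hne
    rcases lt_or_gt_of_ne (sub_ne_zero.mpr hne) with hd | hd
    · set t : ℝ := max (u - (x - 1)) x with ht
      have ht0 : t < 0 := max_lt hd hx
      have htx : x ≤ t := le_max_right _ _
      have htd : u - (x - 1) ≤ t := le_max_left _ _
      have h1 := h (x + t)
      rw [abs_of_neg hx, abs_of_nonpos (by linarith : x + t ≤ 0)] at h1
      nlinarith [sq_nonneg t]
    · set t : ℝ := min (u - (x - 1)) (-x) with ht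
      have ht0 : 0 < t := lt_min hd (by linarith)
      have htd : t ≤ u - (x - 1) := min_le_left _ _
      have htx : t ≤ -x := min_le_right _ _
      have h1 := h (x + t)
      rw [abs_of_neg hx, abs_of_nonpos (by linarith : x + t ≤ 0)] at h1
      nlinarith [sq_nonneg t]
  · rintro rfl y
    rw [abs_of_neg hx]
    rcases abs_cases y with ⟨hy, _⟩ | ⟨hy, _⟩ <;> nlinarith [sq_nonneg (y - x)]

private lemma subdiff_R0_zero :
    subdiff (fun t => ((|t| + t ^ 2 / 2 : ℝ) : EReal)) 0 = Set.Icc (-1) 1 := by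
  ext u
  rw [mem_subdiff_coe (fun t => |t| + t ^ 2 / 2), Set.mem_Icc]
  constructor
  · intro h
    constructor
    · by_contra hu
      push_neg at hu
      have h1 := h (u + 1)
      rw [abs_of_nonpos (by linarith : u + 1 ≤ 0)] at h1
      simp only [abs_zero] at h1
      nlinarith [sq_nonneg (u + 1)]
    · by_contra hu
      push_neg at hu
      have h1 := h (u - 1)
      rw [abs_of_nonneg (by linarith : (0:ℝ) ≤ u - 1)] at h1
      simp only [abs_zero] at h1
      nlinarith [sq_nonneg (u - 1)]
  · rintro ⟨h1, h2⟩ y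
    simp only [abs_zero]
    rcases abs_cases y with ⟨hy, _⟩ | ⟨hy, _⟩ <;> nlinarith [sq_nonneg y]

private lemma spanIcc : ((affineSpan ℝ (Set.Icc (-1:ℝ) 1) : AffineSubspace ℝ ℝ) : Set ℝ) = Set.univ := by
  apply Set.eq_univ_of_forall
  intro r
  have h0 : (0:ℝ) ∈ affineSpan ℝ (Set.Icc (-1:ℝ) 1) :=
    subset_affineSpan ℝ _ (by norm_num : (0:ℝ) ∈ Set.Icc (-1:ℝ) 1)
  have h1 : (1:ℝ) ∈ affineSpan ℝ (Set.Icc (-1:ℝ) 1) :=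
    subset_affineSpan ℝ _ (by norm_num : (1:ℝ) ∈ Set.Icc (-1:ℝ) 1)
  have := (affineSpan ℝ (Set.Icc (-1:ℝ) 1)).smul_vsub_vadd_mem r h1 h0 h0
  simpa using this

private lemma intrinsicInterior_Icc :
    intrinsicInterior ℝ (Set.Icc (-1:ℝ) 1) = Set.Ioo (-1) 1 := by
  apply Set.Subset.antisymm
  · intro v hv
    rw [mem_intrinsicInterior] at hv
    obtain ⟨y, hy, rfl⟩ := hv
    have hopen : IsOpen ((affineSpan ℝ (Set.Icc (-1:ℝ) 1) : AffineSubspace ℝ ℝ) : Set ℝ) := by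
      rw [spanIcc]; exact isOpen_univ
    have hmap := hopen.isOpenMap_subtype_val
    have h2 := hmap.image_interior_subset _ ⟨y, hy, rfl⟩
    have h4 := interior_mono
      (Set.image_preimage_subset (Subtype.val : (affineSpan ℝ (Set.Icc (-1:ℝ) 1)) → ℝ)
        (Set.Icc (-1:ℝ) 1)) h2
    rwa [interior_Icc] at h4

  · rw [← interior_Icc]; exact interior_subset_intrinsicInterior

-- key Fenchel-Young real inequality
private lemma keyFY (u x : ℝ) :
    u * x - (|x| + x ^ 2 / 2) ≤ max (|u| - 1) 0 ^ 2 / 2 := by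
  have h1 : u * x ≤ |u| * |x| := by
    calc u * x ≤ |u * x| := le_abs_self _
    _ = |u| * |x| := abs_mul u x
  have hm1 : |u| - 1 ≤ max (|u| - 1) 0 := le_max_left _ _
  have hm0 : (0:ℝ) ≤ max (|u| - 1) 0 := le_max_right _ _
  nlinarith [sq_nonneg (max (|u| - 1) 0 - |x|), abs_nonneg x,
    mul_le_mul_of_nonneg_right hm1 (abs_nonneg x), sq_abs x]

-- the maximizer
private noncomputable def pstar (u : ℝ) : ℝ :=
  if 1 ≤ u then u - 1 else if u ≤ -1 then u + 1 else 0

private lemma pstar_eq (u : ℝ) :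
    u * pstar u - (|pstar u| + pstar u ^ 2 / 2) = max (|u| - 1) 0 ^ 2 / 2 := by
  unfold pstar
  split_ifs with h1 h2
  · rw [abs_of_nonneg (show (0:ℝ) ≤ u - 1 by linarith), abs_of_nonneg (show (0:ℝ) ≤ u by linarith),
      max_eq_left (by linarith)]
    ring
  · push_neg at h1
    rw [abs_of_neg (by linarith : u < 0), abs_of_nonpos (by linarith : u + 1 ≤ 0),
      max_eq_left (by linarith)]
    ring
  · push_neg at h1 h2
    rw [abs_zero, max_eq_right (by cases abs_cases u with
      | inl h => linarith [h.1]
      | inr h => linarith [h.1])]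
    norm_num

private lemma fenchel_R0 :
    fenchel (fun t => ((|t| + t ^ 2 / 2 : ℝ) : EReal)) =
      fun u => (((max (|u| - 1) 0) ^ 2 / 2 : ℝ) : EReal) := by
  funext u
  have hip : ∀ a b : ℝ, (inner ℝ a b : ℝ) = a * b := fun a b => by simp [real_inner_comm, mul_comm]
  unfold fenchel
  apply le_antisymm
  · apply iSup_le
    intro x
    rw [hip, ← EReal.coe_sub, EReal.coe_le_coe_iff]
    exact keyFY u x
  · refine le_trans (le_of_eq ?_)
      (le_iSup (fun x => ((inner ℝ u x : ℝ) : EReal) - ((|x| + x ^ 2 / 2 : ℝ) : EReal)) (pstar u))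
    simp only [hip, ← EReal.coe_sub, EReal.coe_eq_coe_iff]
    exact (pstar_eq u).symm

private lemma pstar_mem_subdiff_conj (u : ℝ) :
    pstar u ∈ subdiff (fun v => (((max (|v| - 1) 0) ^ 2 / 2 : ℝ) : EReal)) u := by
  rw [mem_subdiff_coe (fun v => (max (|v| - 1) 0) ^ 2 / 2)]
  intro v
  have h1 := keyFY v (pstar u)
  have h2 := pstar_eq u
  nlinarith [h1, h2]

private lemma corrOp_R0_univ :
    corrOp (fun t => ((|t| + t ^ 2 / 2 : ℝ) : EReal)) Set.univ = ({-1, 1} : Set ℝ)ᶜ := by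
  ext v
  simp only [corrOp, Set.mem_iUnion, Set.mem_univ, exists_true_left,
    Set.mem_compl_iff, Set.mem_insert_iff, Set.mem_singleton_iff, not_or, iUnion_true]
  constructor
  · rintro ⟨x, hx⟩
    rcases lt_trichotomy x 0 with h | h | h
    · rw [subdiff_R0_neg h, intrinsicInterior_singleton, Set.mem_singleton_iff] at hx
      subst hx
      constructor <;> intro habs <;> nlinarith
    · subst h
      rw [subdiff_R0_zero, intrinsicInterior_Icc, Set.mem_Ioo] at hx
      constructor <;> intro habs <;> [linarith [hx.1]; linarith [hx.2]]
    · rw [subdiff_R0_pos h, intrinsicInterior_singleton, Set.mem_singleton_iff] at hx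
      subst hx
      constructor <;> intro habs <;> nlinarith
  · rintro ⟨h1, h2⟩
    rcases lt_trichotomy v 1 with hv | hv | hv
    · rcases lt_trichotomy v (-1) with hw | hw | hw
      · refine ⟨v + 1, ?_⟩
        rw [subdiff_R0_neg (by linarith : v + 1 < 0), intrinsicInterior_singleton]
        simp [sub_eq_iff_eq_add]
      · exact absurd hw h1
      · refine ⟨0, ?_⟩
        rw [subdiff_R0_zero, intrinsicInterior_Icc]
        exact ⟨hw, hv⟩
    · exact absurd hv h2
    · refine ⟨v - 1, ?_⟩
      rw [subdiff_R0_pos (by linarith : (0:ℝ) < v - 1), intrinsicInterior_singleton]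
      simp

private lemma domSubdiff_R0 :
    domSubdiff (fun t => ((|t| + t ^ 2 / 2 : ℝ) : EReal)) = Set.univ := by
  apply Set.eq_univ_of_forall
  intro x
  rcases lt_trichotomy x 0 with h | h | h
  · exact ⟨x - 1, by rw [subdiff_R0_neg h]; rfl⟩
  · subst h
    exact ⟨0, by rw [subdiff_R0_zero]; norm_num⟩
  · exact ⟨x + 1, by rw [subdiff_R0_pos h]; rfl⟩

private lemma domSubdiff_conj :
    domSubdiff (fenchel (fun t => ((|t| + t ^ 2 / 2 : ℝ) : EReal))) = Set.univ := by
  rw [fenchel_R0]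
  exact Set.eq_univ_of_forall fun u => ⟨pstar u, pstar_mem_subdiff_conj u⟩

/-- Remark 2.7: the function `R(x) = |x| + x²/2` on `ℝ`, whose
conjugate is `R*(u) = (max(|u|-1,0))²/2` and which has `dom ∂R = dom ∂R* = ℝ`, is not
mirror-stratifiable; in particular `𝒥_R(ℝ) = ℝ ∖ {-1,1}`, so `𝒥_R` cannot map any
stratification of `ℝ` onto a partition of `ℝ`. -/
theorem abs_plus_quadratic_not_mirror_stratifiable :
    let R : ℝ → EReal := fun x => ((|x| + x ^ 2 / 2 : ℝ) : EReal)
    (fenchel R = fun u => (((max (|u| - 1) 0) ^ 2 / 2 : ℝ) : EReal)) ∧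
    domSubdiff R = Set.univ ∧
    domSubdiff (fenchel R) = Set.univ ∧
    corrOp R Set.univ = ({-1, 1} : Set ℝ)ᶜ ∧
    ¬ ∃ S Sd : Set (Set ℝ), IsMirrorStratifiable R S Sd := by
  intro R
  have h1 : fenchel R = fun u => (((max (|u| - 1) 0) ^ 2 / 2 : ℝ) : EReal) := fenchel_R0
  have h2 : domSubdiff R = Set.univ := domSubdiff_R0
  have h3 : domSubdiff (fenchel R) = Set.univ := domSubdiff_conj
  have h4 : corrOp R Set.univ = ({-1, 1} : Set ℝ)ᶜ := corrOp_R0_univ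
  refine ⟨h1, h2, h3, h4, ?_⟩
  rintro ⟨S, Sd, h⟩
  have hdual : ⋃₀ Sd = Set.univ := by rw [h.dual.cover, h3]
  have hmem : (-1 : ℝ) ∈ ⋃₀ Sd := by rw [hdual]; trivial
  obtain ⟨Md, hMd, hm1⟩ := hmem
  have hM : corrOp (fenchel R) Md ∈ S := h.maps_dual Md hMd
  have heq : corrOp R (corrOp (fenchel R) Md) = Md :=
    (h.pairing _ hM Md hMd).mpr rfl
  have hsub : corrOp R (corrOp (fenchel R) Md) ⊆ corrOp R Set.univ := by
    apply Set.biUnion_subset_biUnion_left (Set.subset_univ _)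
  have : (-1 : ℝ) ∈ corrOp R Set.univ := hsub (by rw [heq]; exact hm1)
  rw [h4] at this
  exact this (by norm_num)

end
end

section
/- Consider the parametric problem min_{x∈ℝ^N} E(x,p) = F(x,p) + R(x) with parameter p in an open subset Π of a finite-dimensional linear space, where F(·,p) is convex and C¹ on ℝ^N for each p, and R: ℝ^N → ℝ ∪ {+∞} is proper, lower semicontinuous and convex. Let p₀ ∈ Π and assume: (i) E(·,p₀) has a unique minimizer x⋆(p₀); (ii) E is lower semicontinuous on ℝ^N × Π; (iii) E(x⋆(p₀),·) is continuous at p₀; (iv) ∇F (the gradient in x) is continuous at (x⋆(p₀), p₀); (v) E is level-bounded in x locally uniformly in p around p₀. If R is mirror-stratifiable with respect to (𝒮, 𝒮*), then for all p sufficiently close to p₀, any minimizer x⋆(p) of E(·,p) satisfies M_{x⋆(p₀)} ≤ M_{x⋆(p)} ≤ 𝒥_{R*}(M*_{u⋆(p₀)}), where u⋆(p₀) = −∇F(x⋆(p₀), p₀). -/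
open Filter Topology Set Pointwise

noncomputable section

variable {E : Type*} [NormedAddCommGroup E] [InnerProductSpace ℝ E]

/-- The composite parametric objective `E(x,p) = F(x,p) + R(x)`. -/
def compObj {N : ℕ} {Q : Type*} (F : EuclideanSpace ℝ (Fin N) → Q → ℝ)
    (R : EuclideanSpace ℝ (Fin N) → EReal) (x : EuclideanSpace ℝ (Fin N)) (p : Q) : EReal :=
  ((F x p : ℝ) : EReal) + R x

theorem subset_closure_intrinsicInterior {V : Type*} [NormedAddCommGroup V] [NormedSpace ℝ V]
    [FiniteDimensional ℝ V] {s : Set V} (hs : Convex ℝ s) :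
    s ⊆ closure (intrinsicInterior ℝ s) := by
  intro x hx
  obtain ⟨z, hz⟩ := Set.Nonempty.intrinsicInterior hs ⟨x, hx⟩
  -- key claim
  have key : ∀ θ : ℝ, 0 < θ → θ ≤ 1 → x + θ • (z - x) ∈ intrinsicInterior ℝ s := by
    intro θ hθ0 hθ1
    have hxA : x ∈ affineSpan ℝ s := subset_affineSpan ℝ s hx
    set A := affineSpan ℝ s
    haveI : Nonempty A := ⟨⟨x, hxA⟩⟩
    set x' : A := ⟨x, hxA⟩
    obtain ⟨z', hz', hzz⟩ : ∃ z' ∈ interior ((↑) ⁻¹' s : Set A), (z' : V) = z := by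
      rw [intrinsicInterior] at hz; exact hz.imp (fun a ⟨h1, h2⟩ => ⟨h1, h2⟩)
    set e := AffineIsometryEquiv.constVSub ℝ x'
    set φ : (AffineSubspace.direction A) ≃ₜ A := e.symm.toHomeomorph
    set g : (AffineSubspace.direction A) →ᵃ[ℝ] V :=
      (AffineSubspace.subtype A).comp e.symm.toAffineEquiv.toAffineMap
    have hg : ∀ v, g v = ((φ v : A) : V) := fun v => rfl
    set t : Set (AffineSubspace.direction A) := ⇑g ⁻¹' s
    have ht : Convex ℝ t := hs.affine_preimage g
    have htφ : t = φ ⁻¹' ((↑) ⁻¹' s) := rfl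
    have hvz : e z' ∈ interior t := by
      rw [htφ, ← Homeomorph.preimage_interior]
      show φ (e z') ∈ interior ((↑) ⁻¹' s)
      have : φ (e z') = z' := e.symm_apply_apply z'
      rw [this]; exact hz'
    have hvx : e x' ∈ t := by
      show g (e x') ∈ s
      have : g (e x') = ((x' : A) : V) := by rw [hg]; congr 1; exact e.symm_apply_apply x'
      rw [this]; exact hx
    have hw : θ • (e z') + (1 - θ) • (e x') ∈ interior t :=
      ht.combo_interior_self_mem_interior hvz hvx hθ0 (by linarith) (by ring)
    have hmem : g (θ • (e z') + (1 - θ) • (e x')) ∈ intrinsicInterior ℝ s := by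
      rw [intrinsicInterior]
      refine ⟨φ (θ • (e z') + (1 - θ) • (e x')), ?_, rfl⟩
      rw [htφ, ← Homeomorph.preimage_interior] at hw
      exact hw
    have hcombo : g (θ • (e z') + (1 - θ) • (e x')) = x + θ • (z - x) := by
      have h1 : θ • (e z') + (1 - θ) • (e x') = AffineMap.lineMap (e x') (e z') θ := by
        rw [AffineMap.lineMap_apply_module]; module
      rw [h1, AffineMap.apply_lineMap, AffineMap.lineMap_apply_module]
      have hgz : g (e z') = z := by
        rw [hg]; have : φ (e z') = z' := e.symm_apply_apply z'; rw [this]; exact hzz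
      have hgx : g (e x') = x := by
        rw [hg]; have : φ (e x') = x' := e.symm_apply_apply x'; rw [this]
      rw [hgz, hgx]; module
    rw [← hcombo]; exact hmem
  rw [Metric.mem_closure_iff]
  intro ε hε
  by_cases hzx : z = x
  · exact ⟨z, key 1 one_pos le_rfl |>.imp (fun _ => id) |> fun _ => by
      simpa [hzx] using key 1 one_pos le_rfl, by simp [hzx, hε]⟩
  · have hnorm : 0 < ‖z - x‖ := by simpa [sub_eq_zero] using hzx
    set θ := min 1 (ε / (2 * ‖z - x‖)) with hθ
    have hθ0 : 0 < θ := lt_min one_pos (by positivity)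
    have hθ1 : θ ≤ 1 := min_le_left _ _
    refine ⟨x + θ • (z - x), key θ hθ0 hθ1, ?_⟩
    rw [dist_comm, dist_eq_norm]
    have : x + θ • (z - x) - x = θ • (z - x) := by abel
    rw [this, norm_smul, Real.norm_eq_abs, abs_of_pos hθ0]
    have h2 : θ ≤ ε / (2 * ‖z - x‖) := min_le_right _ _
    calc θ * ‖z - x‖ ≤ (ε / (2 * ‖z - x‖)) * ‖z - x‖ := by nlinarith
      _ = ε / 2 := by field_simp
      _ < ε := by linarith

theorem convex_subdiff (R : E → EReal) (x : E) : Convex ℝ (subdiff R x) := by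
  have : subdiff R x = ⋂ y, {u : E | R x + ((inner ℝ u (y - x) : ℝ) : EReal) ≤ R y} := by
    ext u; simp [subdiff, Set.mem_iInter]
  rw [this]
  refine convex_iInter fun y => ?_
  intro u₁ h₁ u₂ h₂ a b ha hb hab
  simp only [Set.mem_setOf_eq] at h₁ h₂ ⊢
  have hin : (inner ℝ (a • u₁ + b • u₂) (y - x) : ℝ)
      = a * (inner ℝ u₁ (y - x) : ℝ) + b * (inner ℝ u₂ (y - x) : ℝ) := by
    simp [inner_add_left, real_inner_smul_left]
  have hb1 : b = 1 - a := by linarith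
  subst hb1
  rcases le_total ((inner ℝ u₁ (y - x) : ℝ)) ((inner ℝ u₂ (y - x) : ℝ)) with h | h
  · refine le_trans ?_ h₂
    refine add_le_add_right ?_ _
    rw [EReal.coe_le_coe_iff, hin]
    nlinarith [mul_nonneg ha (sub_nonneg.mpr h)]
  · refine le_trans ?_ h₁
    refine add_le_add_right ?_ _
    rw [EReal.coe_le_coe_iff, hin]
    nlinarith [mul_nonneg hb (sub_nonneg.mpr h)]

theorem Rx_real {R : E → EReal} (hP : ProperFn R) {x u : E} (hu : u ∈ subdiff R x) :
    ∃ a : ℝ, R x = (a : EReal) := by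
  refine ⟨(R x).toReal, (EReal.coe_toReal ?_ (hP.1 x)).symm⟩
  intro htop
  obtain ⟨x₀, hx₀⟩ := hP.2
  have := hu x₀
  rw [htop] at this
  rw [EReal.top_add_coe] at this
  exact hx₀ (top_le_iff.mp this)

theorem fenchel_eq {R : E → EReal} (hP : ProperFn R) {x u : E} (hu : u ∈ subdiff R x)
    {a : ℝ} (ha : R x = (a : EReal)) :
    fenchel R u = (((inner ℝ u x : ℝ) - a : ℝ) : EReal) := by
  refine le_antisymm (iSup_le fun y => ?_) ?_
  · rcases eq_or_ne (R y) ⊤ with hy | hy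
    · rw [hy]
      simp
    · obtain ⟨b, hb⟩ : ∃ b : ℝ, R y = (b : EReal) := ⟨(R y).toReal, (EReal.coe_toReal hy (hP.1 y)).symm⟩
      have := hu y
      rw [ha, hb, ← EReal.coe_add, EReal.coe_le_coe_iff] at this
      rw [hb, ← EReal.coe_sub, EReal.coe_le_coe_iff]
      have hsub : (inner ℝ u (y - x) : ℝ) = (inner ℝ u y : ℝ) - (inner ℝ u x : ℝ) := by
        rw [inner_sub_right]
      rw [hsub] at this
      linarith
  · have hle := le_iSup (fun y => ((inner ℝ u y : ℝ) : EReal) - R y) x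
    rw [ha, ← EReal.coe_sub] at hle
    exact hle

theorem mem_subdiff_fenchel {R : E → EReal} (hP : ProperFn R) {x u : E}
    (hu : u ∈ subdiff R x) : x ∈ subdiff (fenchel R) u := by
  obtain ⟨a, ha⟩ := Rx_real hP hu
  have hfe := fenchel_eq hP hu ha
  intro v
  have hge : (((inner ℝ v x : ℝ) - a : ℝ) : EReal) ≤ fenchel R v := by
    have := le_iSup (fun y => ((inner ℝ v y : ℝ) : EReal) - R y) x
    rw [ha, ← EReal.coe_sub] at this
    exact this
  refine le_trans ?_ hge
  rw [hfe, ← EReal.coe_add, EReal.coe_le_coe_iff]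
  have : (inner ℝ x (v - u) : ℝ) = (inner ℝ v x : ℝ) - (inner ℝ u x : ℝ) := by
    rw [inner_sub_right, real_inner_comm x v, real_inner_comm x u]
  rw [this]; ring_nf; exact le_rfl

theorem grad_dir_lb [CompleteSpace E] (f : E → ℝ) (g : E) (x : E) (hg : HasGradientAt f g x)
    (d : E) (c : ℝ) (hc : ∀ t : ℝ, t ∈ Set.Ioc (0:ℝ) 1 → c * t ≤ f (x + t • d) - f x) :
    c ≤ (inner ℝ g d : ℝ) := by
  have hline : HasDerivAt (fun t : ℝ => x + t • d) d 0 := by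
    simpa using ((hasDerivAt_id (0:ℝ)).smul_const d).const_add x
  have hcomp : HasDerivAt (fun t : ℝ => f (x + t • d)) ((inner ℝ g d : ℝ)) 0 := by
    have hx0 : x = x + (0:ℝ) • d := by simp
    rw [hx0] at hg
    have h1 := hg.hasFDerivAt.comp_hasDerivAt (x := (0:ℝ)) hline
    simp [InnerProductSpace.toDual_apply_apply] at h1
    exact h1
  have hslope := hasDerivAt_iff_tendsto_slope.mp hcomp
  have hslope' : Tendsto (slope (fun t : ℝ => f (x + t • d)) 0) (𝓝[>] 0) (𝓝 (inner ℝ g d : ℝ)) :=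
    hslope.mono_left (nhdsWithin_mono _ (fun t ht => ne_of_gt ht))
  refine ge_of_tendsto hslope' ?_
  filter_upwards [Ioc_mem_nhdsGT_of_mem (Set.mem_Ico.mpr ⟨le_refl (0:ℝ), one_pos⟩)] with t ht
  rw [slope_def_field]
  have h := hc t ht
  rw [le_div_iff₀ (by simpa using ht.1)]
  simpa [zero_smul, mul_comm] using h

theorem optimality [CompleteSpace E] {R : E → EReal} (hP : ProperFn R) (hC : ConvexFn R)
    (f : E → ℝ) (g xp : E) (hg : HasGradientAt f g xp)
    (hmin : ∀ x, ((f xp : ℝ) : EReal) + R xp ≤ ((f x : ℝ) : EReal) + R x) :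
    -g ∈ subdiff R xp := by
  obtain ⟨x₀, hx₀⟩ := hP.2
  have hxtop : R xp ≠ ⊤ := by
    intro htop
    have h := hmin x₀
    rw [htop] at h
    have hlhs : ((f xp : ℝ) : EReal) + ⊤ = ⊤ := by
      rw [EReal.coe_add_top]
    rw [hlhs, top_le_iff] at h
    have : ((f x₀ : ℝ) : EReal) + R x₀ < ⊤ := EReal.add_lt_top (EReal.coe_ne_top _) hx₀
    rw [h] at this
    exact lt_irrefl _ this
  obtain ⟨a, ha⟩ : ∃ a : ℝ, R xp = (a : EReal) := ⟨(R xp).toReal, (EReal.coe_toReal hxtop (hP.1 xp)).symm⟩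
  intro y
  rcases eq_or_ne (R y) ⊤ with hy | hy
  · rw [hy]; exact le_top
  obtain ⟨b, hb⟩ : ∃ b : ℝ, R y = (b : EReal) := ⟨(R y).toReal, (EReal.coe_toReal hy (hP.1 y)).symm⟩
  -- epigraph convexity
  have hepi : ∀ t : ℝ, t ∈ Set.Ioc (0:ℝ) 1 →
      R (xp + t • (y - xp)) ≤ (((1-t) * a + t * b : ℝ) : EReal) := by
    intro t ht
    have h1 : (xp, a) ∈ {p : E × ℝ | R p.1 ≤ (p.2 : EReal)} := by simp [ha]
    have h2 : (y, b) ∈ {p : E × ℝ | R p.1 ≤ (p.2 : EReal)} := by simp [hb]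
    have h3 := hC h1 h2 (by linarith [ht.2] : (0:ℝ) ≤ 1 - t) (le_of_lt ht.1) (by ring)
    simp only [Prod.smul_mk, Prod.mk_add_mk, smul_eq_mul, Set.mem_setOf_eq] at h3
    have heq : (1 - t) • xp + t • y = xp + t • (y - xp) := by module
    rwa [heq] at h3
  have hc : ∀ t : ℝ, t ∈ Set.Ioc (0:ℝ) 1 → (a - b) * t ≤ f (xp + t • (y - xp)) - f xp := by
    intro t ht
    have h := le_trans (hmin (xp + t • (y - xp))) (add_le_add_right (hepi t ht) _)
    rw [ha, ← EReal.coe_add, ← EReal.coe_add, EReal.coe_le_coe_iff] at h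
    linarith
  have hkey := grad_dir_lb f g xp hg (y - xp) (a - b) hc
  rw [ha, hb, ← EReal.coe_add, EReal.coe_le_coe_iff]
  rw [inner_neg_left]
  linarith

theorem sep_eps {S : Set (Set E)} (hS : S.Finite) (x₀ : E) :
    ∃ ε > (0:ℝ), ∀ M ∈ S, ∀ y ∈ M, dist y x₀ < ε → x₀ ∈ closure M := by
  classical
  set T := hS.toFinset.filter (fun M => x₀ ∉ closure M ∧ M.Nonempty) with hT
  rcases T.eq_empty_or_nonempty with hTe | hTne
  · refine ⟨1, one_pos, fun M hM y hy _ => ?_⟩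
    by_contra hx
    have : M ∈ T := by
      rw [hT, Finset.mem_filter]
      exact ⟨hS.mem_toFinset.mpr hM, hx, ⟨y, hy⟩⟩
    rw [hTe] at this
    exact absurd this (Finset.notMem_empty M)
  · obtain ⟨M₀, hM₀, hmin⟩ := T.exists_min_image (fun M => Metric.infDist x₀ (closure M)) hTne
    rw [hT, Finset.mem_filter] at hM₀
    have hpos : 0 < Metric.infDist x₀ (closure M₀) :=
      (IsClosed.notMem_iff_infDist_pos isClosed_closure hM₀.2.2.closure).mp hM₀.2.1
    refine ⟨Metric.infDist x₀ (closure M₀), hpos, fun M hM y hy hd => ?_⟩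
    by_contra hx
    have hMT : M ∈ T := by
      rw [hT, Finset.mem_filter]
      exact ⟨hS.mem_toFinset.mpr hM, hx, ⟨y, hy⟩⟩
    have h1 := hmin M hMT
    have h2 : Metric.infDist x₀ (closure M) ≤ dist x₀ y :=
      Metric.infDist_le_dist_of_mem (subset_closure hy)
    rw [dist_comm] at h2
    linarith

set_option maxHeartbeats 1000000 in
theorem conv_min {N : ℕ} {Q : Type*} [NormedAddCommGroup Q] [NormedSpace ℝ Q]
    (Pi : Set Q) (p₀ : Q) (hp₀ : p₀ ∈ Pi)
    (F : EuclideanSpace ℝ (Fin N) → Q → ℝ) (R : EuclideanSpace ℝ (Fin N) → EReal)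
    (hP : ProperFn R)
    (xstar : EuclideanSpace ℝ (Fin N))
    (hmin : ∀ x, compObj F R xstar p₀ ≤ compObj F R x p₀)
    (huniq : ∀ x', (∀ x, compObj F R x' p₀ ≤ compObj F R x p₀) → x' = xstar)
    (hlsc : LowerSemicontinuousOn (fun q : EuclideanSpace ℝ (Fin N) × Q => compObj F R q.1 q.2)
      (Set.univ ×ˢ Pi))
    (hcont : ContinuousWithinAt (fun p => compObj F R xstar p) Pi p₀)
    (hlb : ∀ c : ℝ, ∃ V ∈ 𝓝 p₀, ∃ Ω : Set (EuclideanSpace ℝ (Fin N)),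
      Bornology.IsBounded Ω ∧ ∀ p ∈ V ∩ Pi, {x | compObj F R x p ≤ (c : EReal)} ⊆ Ω)
    (δ : ℝ) (hδ : 0 < δ) :
    ∃ ε > (0:ℝ), ∀ p ∈ Pi, dist p p₀ < ε →
      ∀ xp, (∀ x, compObj F R xp p ≤ compObj F R x p) → dist xp xstar < δ := by
  by_contra hcon
  push_neg at hcon
  have hseq : ∀ n : ℕ, ∃ p, p ∈ Pi ∧ dist p p₀ < 1/(n+1) ∧
      ∃ xp, (∀ x, compObj F R xp p ≤ compObj F R x p) ∧ δ ≤ dist xp xstar := by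
    intro n
    obtain ⟨p, hpPi, hpd, xp, hxpmin, hxpd⟩ := hcon (1/(n+1)) (by positivity)
    exact ⟨p, hpPi, hpd, xp, hxpmin, hxpd⟩
  choose p hpPi hpd xs hxsmin hxsd using hseq
  have ptend : Tendsto p atTop (𝓝 p₀) := by
    rw [tendsto_iff_dist_tendsto_zero]
    refine squeeze_zero (fun n => dist_nonneg) (fun n => le_of_lt (hpd n)) ?_
    exact tendsto_one_div_add_atTop_nhds_zero_nat
  have ptendW : Tendsto p atTop (𝓝[Pi] p₀) :=
    tendsto_nhdsWithin_iff.mpr ⟨ptend, Eventually.of_forall hpPi⟩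
  set e₀ := compObj F R xstar p₀ with he₀
  obtain ⟨x₀, hx₀⟩ := hP.2
  have hetop : e₀ ≠ ⊤ := by
    intro h
    have h1 := hmin x₀
    rw [h, top_le_iff] at h1
    have : compObj F R x₀ p₀ < ⊤ := EReal.add_lt_top (EReal.coe_ne_top _) hx₀
    rw [h1] at this
    exact lt_irrefl _ this
  have hebot : e₀ ≠ ⊥ := by
    rw [he₀, compObj]
    intro h
    rcases EReal.add_eq_bot_iff.mp h with h1 | h1
    · exact EReal.coe_ne_bot _ h1
    · exact hP.1 xstar h1
  obtain ⟨r₀, hr₀⟩ : ∃ r₀ : ℝ, e₀ = (r₀ : EReal) := ⟨e₀.toReal, (EReal.coe_toReal hetop hebot).symm⟩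
  set c := r₀ + 1 with hc
  have he₀lt : e₀ < (c : EReal) := by
    rw [hr₀, EReal.coe_lt_coe_iff]
    linarith
  have hlt : ∀ᶠ q in 𝓝[Pi] p₀, compObj F R xstar q < (c : EReal) :=
    hcont (Iio_mem_nhds he₀lt)
  have hlt' : ∀ᶠ n in atTop, compObj F R xstar (p n) < (c : EReal) := ptendW.eventually hlt
  obtain ⟨V, hV, Ω, hΩb, hsub⟩ := hlb c
  have hVn : ∀ᶠ n in atTop, p n ∈ V := ptend hV
  have hΩn : ∀ᶠ n in atTop, xs n ∈ Ω := by
    filter_upwards [hlt', hVn] with n h1 h2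
    exact hsub (p n) ⟨h2, hpPi n⟩ (le_of_lt (lt_of_le_of_lt (hxsmin n xstar) h1))
  obtain ⟨n₁, hn₁⟩ := eventually_atTop.mp hΩn
  have hmem : ∀ k : ℕ, xs (n₁ + k) ∈ Ω := fun k => hn₁ (n₁ + k) (Nat.le_add_right _ _)
  obtain ⟨xbar, _, φ, hφmono, hφtend⟩ :=
    tendsto_subseq_of_bounded hΩb hmem
  have hidx : Tendsto (fun k => n₁ + φ k) atTop atTop :=
    tendsto_atTop_mono (fun k => Nat.le_add_left (φ k) n₁) hφmono.tendsto_atTop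
  have hqtend : Tendsto (fun k => p (n₁ + φ k)) atTop (𝓝[Pi] p₀) := ptendW.comp hidx
  have hxtend : Tendsto (fun k => xs (n₁ + φ k)) atTop (𝓝 xbar) := hφtend
  have hpair : Tendsto (fun k => (xs (n₁ + φ k), p (n₁ + φ k))) atTop
      (𝓝[Set.univ ×ˢ Pi] (xbar, p₀)) := by
    rw [tendsto_nhdsWithin_iff]
    constructor
    · exact hxtend.prodMk_nhds (hqtend.mono_right nhdsWithin_le_nhds)
    · exact Eventually.of_forall fun k => ⟨Set.mem_univ _, hpPi _⟩
  have hlscW := hlsc (xbar, p₀) ⟨Set.mem_univ _, hp₀⟩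
  have hclaim : compObj F R xbar p₀ ≤ e₀ := by
    by_contra hgt
    push_neg at hgt
    obtain ⟨b, hb1, hb2⟩ := exists_between hgt
    have hev1 := hpair.eventually (hlscW b hb2)
    have hev2 : ∀ᶠ k in atTop, compObj F R xstar (p (n₁ + φ k)) < b :=
      hqtend.eventually (hcont (Iio_mem_nhds hb1))
    obtain ⟨k, h1, h2⟩ := (hev1.and hev2).exists
    exact absurd (lt_of_lt_of_le h1 (hxsmin (n₁ + φ k) xstar)) (not_lt.mpr (le_of_lt h2))
  have hxbarmin : ∀ x, compObj F R xbar p₀ ≤ compObj F R x p₀ :=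
    fun x => le_trans hclaim (hmin x)
  have hxbar := huniq xbar hxbarmin
  have hdtend : Tendsto (fun k => dist (xs (n₁ + φ k)) xstar) atTop (𝓝 0) := by
    rw [← hxbar]
    exact tendsto_iff_dist_tendsto_zero.mp hxtend
  have : δ ≤ 0 := ge_of_tendsto hdtend (Eventually.of_forall fun k => hxsd (n₁ + φ k))
  linarith

set_option maxHeartbeats 2000000 in
/-- Theorem 3.2, sensitivity without non-degeneracy: under
assumptions (i)-(v), if `R` is mirror-stratifiable then for all `p` close to `p₀`
every minimizer `x⋆(p)` of `E(·,p)` satisfies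
`M_{x⋆(p₀)} ≤ M_{x⋆(p)} ≤ 𝒥_{R*}(M*_{u⋆(p₀)})` with `u⋆(p₀) = -∇F(x⋆(p₀),p₀)`. -/
theorem sensitivity_mirror_stratifiable
    {N : ℕ} {Q : Type*} [NormedAddCommGroup Q] [NormedSpace ℝ Q] [FiniteDimensional ℝ Q]
    (Pi : Set Q) (hPi : IsOpen Pi) (p₀ : Q) (hp₀ : p₀ ∈ Pi)
    (F : EuclideanSpace ℝ (Fin N) → Q → ℝ)
    (gF : EuclideanSpace ℝ (Fin N) → Q → EuclideanSpace ℝ (Fin N))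
    (hFconv : ∀ p ∈ Pi, ConvexOn ℝ Set.univ (fun x => F x p))
    (hFgrad : ∀ p ∈ Pi, ∀ x, HasGradientAt (fun z => F z p) (gF x p) x)
    (R : EuclideanSpace ℝ (Fin N) → EReal) (hR : ProperConvexLsc R)
    -- (i) unique minimizer of `E(·,p₀)`
    (xstar : EuclideanSpace ℝ (Fin N))
    (hmin : ∀ x, compObj F R xstar p₀ ≤ compObj F R x p₀)
    (huniq : ∀ x', (∀ x, compObj F R x' p₀ ≤ compObj F R x p₀) → x' = xstar)
    -- (ii) `E` lsc on `ℝ^N × Π`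
    (hlsc : LowerSemicontinuousOn (fun q : EuclideanSpace ℝ (Fin N) × Q => compObj F R q.1 q.2)
      (Set.univ ×ˢ Pi))
    -- (iii) `E(x⋆(p₀),·)` continuous at `p₀`
    (hcont : ContinuousWithinAt (fun p => compObj F R xstar p) Pi p₀)
    -- (iv) `∇F` continuous at `(x⋆(p₀),p₀)`
    (hgcont : ContinuousWithinAt (fun q : EuclideanSpace ℝ (Fin N) × Q => gF q.1 q.2)
      (Set.univ ×ˢ Pi) (xstar, p₀))
    -- (v) level-boundedness in `x` locally uniformly in `p` around `p₀`
    (hlb : ∀ c : ℝ, ∃ V ∈ 𝓝 p₀, ∃ Ω : Set (EuclideanSpace ℝ (Fin N)),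
      Bornology.IsBounded Ω ∧ ∀ p ∈ V ∩ Pi, {x | compObj F R x p ≤ (c : EReal)} ⊆ Ω)
    -- mirror-stratifiability of `R`
    (S Sd : Set (Set (EuclideanSpace ℝ (Fin N))))
    (hms : IsMirrorStratifiable R S Sd)
    (Mx0 : Set (EuclideanSpace ℝ (Fin N))) (hMx0 : Mx0 ∈ S) (hxstar : xstar ∈ Mx0)
    (Mu0 : Set (EuclideanSpace ℝ (Fin N))) (hMu0 : Mu0 ∈ Sd) (hu0 : -gF xstar p₀ ∈ Mu0) :
    ∃ ε > (0:ℝ), ∀ p ∈ Pi, dist p p₀ < ε →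
      ∀ xp, (∀ x, compObj F R xp p ≤ compObj F R x p) →
        ∀ Mp ∈ S, xp ∈ Mp →
          stratLE Mx0 Mp ∧ stratLE Mp (corrOp (fenchel R) Mu0) := by
  classical
  obtain ⟨hP, hC, _⟩ := hR
  set u₀ := -gF xstar p₀ with hu₀def
  obtain ⟨ε₁, hε₁, hsep₁⟩ := sep_eps hms.primal.finite xstar
  obtain ⟨ε₂, hε₂, hsep₂⟩ := sep_eps hms.dual.finite u₀
  obtain ⟨εa, hεa, hconv⟩ := conv_min Pi p₀ hp₀ F R hP xstar hmin huniq hlsc hcont hlb ε₁ hε₁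
  obtain ⟨θ, hθ, hgθ⟩ := Metric.continuousWithinAt_iff.mp hgcont ε₂ hε₂
  obtain ⟨εb, hεb, hconvb⟩ :=
    conv_min Pi p₀ hp₀ F R hP xstar hmin huniq hlsc hcont hlb (θ/2) (half_pos hθ)
  refine ⟨min εa (min εb (θ/2)), by positivity, ?_⟩
  intro q hq hqd xp hxpmin Mp hMpS hxpMp
  have hda : dist q p₀ < εa := lt_of_lt_of_le hqd (min_le_left _ _)
  have hdb : dist q p₀ < εb :=
    lt_of_lt_of_le hqd (le_trans (min_le_right _ _) (min_le_left _ _))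
  have hdθ : dist q p₀ < θ/2 :=
    lt_of_lt_of_le hqd (le_trans (min_le_right _ _) (min_le_right _ _))
  have hx1 : dist xp xstar < ε₁ := hconv q hq hda xp hxpmin
  have hx2 : dist xp xstar < θ/2 := hconvb q hq hdb xp hxpmin
  set up := -gF xp q with hupdef
  have hup : up ∈ subdiff R xp :=
    optimality hP hC (fun z => F z q) (gF xp q) xp (hFgrad q hq xp) (fun x => hxpmin x)
  have hdist_g : dist (gF xp q) (gF xstar p₀) < ε₂ := by
    have hmem : ((xp, q) : EuclideanSpace ℝ (Fin N) × Q) ∈ Set.univ ×ˢ Pi :=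
      ⟨Set.mem_univ _, hq⟩
    have hdp : dist ((xp, q) : EuclideanSpace ℝ (Fin N) × Q) (xstar, p₀) < θ := by
      rw [Prod.dist_eq]
      exact max_lt (lt_of_lt_of_le hx2 (by linarith)) (lt_of_lt_of_le hdθ (by linarith))
    have h3 := hgθ hmem hdp
    simpa using h3
  have hdist_u : dist up u₀ < ε₂ := by
    rw [hupdef, hu₀def, dist_neg_neg]
    exact hdist_g
  -- lower bound
  have hxcl : xstar ∈ closure Mp := hsep₁ Mp hMpS xp hxpMp hx1
  have hlow : stratLE Mx0 Mp :=
    hms.primal.frontier_cond Mx0 hMx0 Mp hMpS ⟨xstar, hxstar, hxcl⟩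
  -- upper bound
  have hxdual : xp ∈ subdiff (fenchel R) up := mem_subdiff_fenchel hP hup
  have hupdom : up ∈ ⋃₀ Sd := by
    rw [hms.dual.cover]
    exact ⟨xp, hxdual⟩
  obtain ⟨Mup, hMupSd, hupMup⟩ := hupdom
  have hu0cl : u₀ ∈ closure Mup := hsep₂ Mup hMupSd up hupMup hdist_u
  have hd1 : stratLE Mu0 Mup :=
    hms.dual.frontier_cond Mu0 hMu0 Mup hMupSd ⟨u₀, hu0, hu0cl⟩
  have hA : corrOp (fenchel R) Mu0 ∈ S := hms.maps_dual Mu0 hMu0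
  have hB : corrOp (fenchel R) Mup ∈ S := hms.maps_dual Mup hMupSd
  have hpA : corrOp R (corrOp (fenchel R) Mu0) = Mu0 :=
    (hms.pairing _ hA Mu0 hMu0).mpr rfl
  have hpB : corrOp R (corrOp (fenchel R) Mup) = Mup :=
    (hms.pairing _ hB Mup hMupSd).mpr rfl
  have hdec : stratLE (corrOp (fenchel R) Mup) (corrOp (fenchel R) Mu0) := by
    have hiff := hms.decreasing _ hB _ hA
    rw [hpA, hpB] at hiff
    exact hiff.mpr hd1
  have hkey : Mp ⊆ closure (corrOp (fenchel R) Mup) := by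
    apply hms.primal.frontier_cond Mp hMpS _ hB
    refine ⟨xp, hxpMp, ?_⟩
    have h1 : xp ∈ closure (intrinsicInterior ℝ (subdiff (fenchel R) up)) :=
      subset_closure_intrinsicInterior (convex_subdiff _ _) hxdual
    have h2 : intrinsicInterior ℝ (subdiff (fenchel R) up) ⊆ corrOp (fenchel R) Mup :=
      Set.subset_biUnion_of_mem (u := fun x => intrinsicInterior ℝ (subdiff (fenchel R) x)) hupMup
    exact closure_mono h2 h1
  have hup2 : stratLE Mp (corrOp (fenchel R) Mu0) := by
    intro w hw
    have h3 : closure (corrOp (fenchel R) Mup) ⊆ closure (corrOp (fenchel R) Mu0) := by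
      calc closure (corrOp (fenchel R) Mup)
          ⊆ closure (closure (corrOp (fenchel R) Mu0)) := closure_mono hdec
        _ = closure (corrOp (fenchel R) Mu0) := closure_closure
    exact h3 (hkey hw)
  exact ⟨hlow, hup2⟩

end
end

section
/- Consider the parametric problem min_{x∈ℝ^N} E(x,p) = F(x,p) + R(x) with parameter p in an open subset Π of a finite-dimensional linear space, where F(·,p) is convex and C¹ on ℝ^N for each p, and R: ℝ^N → ℝ ∪ {+∞} is proper, lower semicontinuous and convex. Let p₀ ∈ Π and assume: (i) E(·,p₀) has a unique minimizer x⋆(p₀); (ii) E is lower semicontinuous on ℝ^N × Π; (iii) E(x⋆(p₀),·) is continuous at p₀; (iv) ∇F is continuous at (x⋆(p₀), p₀); (v) E is level-bounded in x locally uniformly in p around p₀. Assume in addition the quadratic growth condition: there exist a neighbourhood V of x⋆(p₀) and κ > 0 with E(x,p₀) ≥ E(x⋆(p₀),p₀) + κ‖x − x⋆(p₀)‖² for all x ∈ V, and that ∇F(x,·) is Lipschitz continuous in a neighbourhood of p₀ with a Lipschitz constant ν independent of x ∈ V. Then for any sequence p_k → p₀ and any minimizers x⋆_k of E(·,p_k),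 one has for all k large enough ‖x⋆_k − x⋆(p₀)‖ ≤ (ν/κ)‖p_k − p₀‖; in particular d(x⋆(p₀), Argmin E(·,p_k)) ≤ (ν/κ)‖p_k − p₀‖. -/
open Filter Topology Set Pointwise

noncomputable section

variable {E : Type*} [NormedAddCommGroup E] [InnerProductSpace ℝ E]

/-- Remark 3.4, quadratic growth: under assumptions (i)-(v), a
quadratic growth condition at `x⋆(p₀)` and local Lipschitz continuity of `∇F(x,·)`
uniformly in `x`, minimizers for `p_k → p₀` satisfy, for `k` large,
`‖x⋆_k − x⋆(p₀)‖ ≤ (ν/κ)‖p_k − p₀‖`; in particular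
`d(x⋆(p₀), Argmin E(·,p_k)) ≤ (ν/κ)‖p_k − p₀‖`. -/
theorem sensitivity_quadratic_growth
    {N : ℕ} {Q : Type*} [NormedAddCommGroup Q] [NormedSpace ℝ Q] [FiniteDimensional ℝ Q]
    (Pi : Set Q) (hPi : IsOpen Pi) (p₀ : Q) (hp₀ : p₀ ∈ Pi)
    (F : EuclideanSpace ℝ (Fin N) → Q → ℝ)
    (gF : EuclideanSpace ℝ (Fin N) → Q → EuclideanSpace ℝ (Fin N))
    (hFconv : ∀ p ∈ Pi, ConvexOn ℝ Set.univ (fun x => F x p))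
    (hFgrad : ∀ p ∈ Pi, ∀ x, HasGradientAt (fun z => F z p) (gF x p) x)
    (R : EuclideanSpace ℝ (Fin N) → EReal) (hR : ProperConvexLsc R)
    -- (i) unique minimizer of `E(·,p₀)`
    (xstar : EuclideanSpace ℝ (Fin N))
    (hmin : ∀ x, compObj F R xstar p₀ ≤ compObj F R x p₀)
    (huniq : ∀ x', (∀ x, compObj F R x' p₀ ≤ compObj F R x p₀) → x' = xstar)
    -- (ii) `E` lsc on `ℝ^N × Π`
    (hlsc : LowerSemicontinuousOn (fun q : EuclideanSpace ℝ (Fin N) × Q => compObj F R q.1 q.2)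
      (Set.univ ×ˢ Pi))
    -- (iii) `E(x⋆(p₀),·)` continuous at `p₀`
    (hcont : ContinuousWithinAt (fun p => compObj F R xstar p) Pi p₀)
    -- (iv) `∇F` continuous at `(x⋆(p₀),p₀)`
    (hgcont : ContinuousWithinAt (fun q : EuclideanSpace ℝ (Fin N) × Q => gF q.1 q.2)
      (Set.univ ×ˢ Pi) (xstar, p₀))
    -- (v) level-boundedness in `x` locally uniformly in `p` around `p₀`
    (hlb : ∀ c : ℝ, ∃ V ∈ 𝓝 p₀, ∃ Ω : Set (EuclideanSpace ℝ (Fin N)),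
      Bornology.IsBounded Ω ∧ ∀ p ∈ V ∩ Pi, {x | compObj F R x p ≤ (c : EReal)} ⊆ Ω)
    -- quadratic growth on a neighbourhood `V` of `x⋆(p₀)`
    (V : Set (EuclideanSpace ℝ (Fin N))) (hV : V ∈ 𝓝 xstar) (κ : ℝ) (hκ : 0 < κ)
    (hgrowth : ∀ x ∈ V,
      compObj F R xstar p₀ + ((κ * ‖x - xstar‖ ^ 2 : ℝ) : EReal) ≤ compObj F R x p₀)
    -- Lipschitz continuity of `∇F(x,·)` near `p₀`, uniformly in `x ∈ V`
    (ν : ℝ) (hν : 0 ≤ ν)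
    (hlip : ∃ W ∈ 𝓝 p₀, ∀ x ∈ V, ∀ p ∈ W ∩ Pi, ∀ q ∈ W ∩ Pi,
      ‖gF x p - gF x q‖ ≤ ν * ‖p - q‖) :
    ∀ pk : ℕ → Q, (∀ k, pk k ∈ Pi) → Tendsto pk atTop (𝓝 p₀) →
      ∀ xk : ℕ → EuclideanSpace ℝ (Fin N),
        (∀ k x, compObj F R (xk k) (pk k) ≤ compObj F R x (pk k)) →
        ∀ᶠ k in atTop,
          ‖xk k - xstar‖ ≤ ν / κ * ‖pk k - p₀‖ ∧
          Metric.infDist xstar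
            {x | ∀ z, compObj F R x (pk k) ≤ compObj F R z (pk k)}
            ≤ ν / κ * ‖pk k - p₀‖ := by
  intro pk hpkPi hpk xk hxkmin
  obtain ⟨⟨hRbot, x₁, hx₁⟩, -, -⟩ := hR
  -- `R xstar` is a real number
  have hRxstar_ne_top : R xstar ≠ ⊤ := by
    intro htop
    have h1 : compObj F R xstar p₀ ≤ compObj F R x₁ p₀ := hmin x₁
    have h2 : compObj F R xstar p₀ = ⊤ := by
      simp [compObj, htop, EReal.add_top_of_ne_bot (EReal.coe_ne_bot _)]
    rw [h2, top_le_iff] at h1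
    exact (EReal.add_lt_top (EReal.coe_ne_top _) hx₁).ne h1
  set ρ : ℝ := (R xstar).toReal with hρdef
  have hρ : R xstar = (ρ : EReal) := (EReal.coe_toReal hRxstar_ne_top (hRbot xstar)).symm
  -- rewrite compObj in real form when R is finite
  have hco : ∀ (x : EuclideanSpace ℝ (Fin N)) (p : Q) (s : ℝ), R x = (s : EReal) →
      compObj F R x p = ((F x p + s : ℝ) : EReal) := by
    intro x p s hs
    simp [compObj, hs, EReal.coe_add]
  -- `R (xk k)` is a real number for every k
  have hrk : ∀ k, R (xk k) = (((R (xk k)).toReal : ℝ) : EReal) := by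
    intro k
    refine (EReal.coe_toReal ?_ (hRbot _)).symm
    intro htop
    have h1 : compObj F R (xk k) (pk k) ≤ compObj F R xstar (pk k) := hxkmin k xstar
    rw [hco xstar (pk k) ρ hρ] at h1
    have h2 : compObj F R (xk k) (pk k) = ⊤ := by
      simp [compObj, htop, EReal.add_top_of_ne_bot (EReal.coe_ne_bot _)]
    rw [h2, top_le_iff] at h1
    exact EReal.coe_ne_top _ h1
  set rk : ℕ → ℝ := fun k => (R (xk k)).toReal with hrkdef
  -- optimality in real form
  have hoptR : ∀ k, F (xk k) (pk k) + rk k ≤ F xstar (pk k) + ρ := by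
    intro k
    have h1 := hxkmin k xstar
    rw [hco xstar (pk k) ρ hρ, hco (xk k) (pk k) (rk k) (hrk k)] at h1
    exact_mod_cast h1
  -- tendsto within Pi
  have hpk' : Tendsto pk atTop (𝓝[Pi] p₀) :=
    tendsto_nhdsWithin_of_tendsto_nhds_of_eventually_within pk hpk
      (Eventually.of_forall hpkPi)
  set m : ℝ := F xstar p₀ + ρ with hmdef
  have hcont' : Tendsto (fun k => compObj F R xstar (pk k)) atTop (𝓝 ((m : ℝ) : EReal)) := by
    have := hcont.tendsto.comp hpk'
    rwa [hco xstar p₀ ρ hρ] at this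
  -- Step 1: eventual boundedness of xk
  obtain ⟨V', hV', Ω, hΩbd, hΩ⟩ := hlb (m + 1)
  have hEv1 : ∀ᶠ k in atTop, compObj F R xstar (pk k) < ((m + 1 : ℝ) : EReal) :=
    hcont'.eventually_lt_const (by exact_mod_cast (lt_add_one m))
  have hEv2 : ∀ᶠ k in atTop, pk k ∈ V' := hpk.eventually_mem hV'
  have hΩev : ∀ᶠ k in atTop, xk k ∈ Ω := by
    filter_upwards [hEv1, hEv2] with k h1 h2
    exact hΩ (pk k) ⟨h2, hpkPi k⟩ (le_trans (hxkmin k xstar) h1.le)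
  -- Step 2: xk → xstar
  have hconv : Tendsto xk atTop (𝓝 xstar) := by
    apply tendsto_of_subseq_tendsto
    intro ns hns
    obtain ⟨K₀, hK₀⟩ := (hns.eventually hΩev).exists_forall_of_atTop
    set y : ℕ → EuclideanSpace ℝ (Fin N) := fun i => xk (ns (i + K₀)) with hydef
    have hyΩ : ∀ i, y i ∈ closure Ω := fun i =>
      subset_closure (hK₀ (i + K₀) (Nat.le_add_left _ _))
    obtain ⟨xb, -, φ, hφ, hyconv⟩ := hΩbd.isCompact_closure.tendsto_subseq hyΩ
    set n : ℕ → ℕ := fun j => ns (φ j + K₀) with hndef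
    have hn : Tendsto n atTop atTop :=
      hns.comp ((tendsto_add_atTop_nat K₀).comp hφ.tendsto_atTop)
    have hxn : Tendsto (fun j => xk (n j)) atTop (𝓝 xb) := hyconv
    have hpn : Tendsto (fun j => pk (n j)) atTop (𝓝[Pi] p₀) := hpk'.comp hn
    -- xb = xstar via lsc + uniqueness
    have hle : compObj F R xb p₀ ≤ ((m : ℝ) : EReal) := by
      by_contra h
      push_neg at h
      obtain ⟨y0, hy0₁, hy0₂⟩ := exists_between h
      have hlscb := hlsc (xb, p₀) (by simp [hp₀])
      have hq : Tendsto (fun j => ((xk (n j), pk (n j)) :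
          EuclideanSpace ℝ (Fin N) × Q)) atTop (𝓝[Set.univ ×ˢ Pi] (xb, p₀)) := by
        apply tendsto_nhdsWithin_of_tendsto_nhds_of_eventually_within
        · exact hxn.prodMk_nhds (hpn.mono_right nhdsWithin_le_nhds)
        · exact Eventually.of_forall fun j => ⟨trivial, hpkPi (n j)⟩
      have hE1 : ∀ᶠ j in atTop, y0 < compObj F R (xk (n j)) (pk (n j)) :=
        hq.eventually (hlscb y0 hy0₂)
      have hE2 : ∀ᶠ j in atTop, compObj F R xstar (pk (n j)) < y0 :=
        (hcont'.comp hn).eventually_lt_const hy0₁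
      obtain ⟨j, h1, h2⟩ := (hE1.and hE2).exists
      exact absurd (lt_of_lt_of_le h1 (hxkmin (n j) xstar)) (not_lt.mpr h2.le)
    have hxbmin : ∀ x, compObj F R xb p₀ ≤ compObj F R x p₀ := by
      intro x
      refine le_trans hle (le_trans ?_ (hmin x))
      rw [hco xstar p₀ ρ hρ]
    have hxb : xb = xstar := huniq xb hxbmin
    exact ⟨fun j => φ j + K₀, hxb ▸ hyconv⟩
  -- Step 3: the estimate
  obtain ⟨r, hr, hball⟩ := Metric.mem_nhds_iff.mp hV
  obtain ⟨W, hW, hlipW⟩ := hlip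
  have hA : ∀ᶠ k in atTop, xk k ∈ Metric.ball xstar r :=
    hconv.eventually_mem (Metric.ball_mem_nhds xstar hr)
  have hB : ∀ᶠ k in atTop, pk k ∈ W := hpk.eventually_mem hW
  filter_upwards [hA, hB] with k hAk hBk
  set v : EuclideanSpace ℝ (Fin N) := xk k - xstar with hvdef
  set d : ℝ := ‖v‖ with hddef
  have hdr : d < r := by
    rw [hddef, hvdef, ← dist_eq_norm]
    exact Metric.mem_ball.mp hAk
  have hxkV : xk k ∈ V := hball hAk
  -- growth in real form
  have hgrowR : F xstar p₀ + ρ + κ * d ^ 2 ≤ F (xk k) p₀ + rk k := by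
    have h1 := hgrowth (xk k) hxkV
    rw [hco xstar p₀ ρ hρ, hco (xk k) p₀ (rk k) (hrk k)] at h1
    exact_mod_cast h1
  have hkey : κ * d ^ 2 ≤
      (F (xk k) p₀ - F (xk k) (pk k)) - (F xstar p₀ - F xstar (pk k)) := by
    have := hoptR k
    linarith
  -- MVT
  set L : ℝ → EuclideanSpace ℝ (Fin N) := fun t => xstar + t • v with hLdef
  have hL : ∀ t : ℝ, HasDerivAt L v t := by
    intro t
    have h1 : HasDerivAt (fun s : ℝ => s • v) ((1 : ℝ) • v) t :=
      (hasDerivAt_id t).smul_const v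
    rw [one_smul] at h1
    exact h1.const_add xstar
  set g : ℝ → ℝ := fun t => F (L t) p₀ - F (L t) (pk k) with hgdef
  set g' : ℝ → ℝ := fun t =>
    (inner ℝ (gF (L t) p₀ - gF (L t) (pk k)) v : ℝ) with hg'def
  have hg : ∀ t : ℝ, HasDerivAt g (g' t) t := by
    intro t
    have h1 := ((hFgrad p₀ hp₀ (L t)).hasFDerivAt).comp_hasDerivAt t (hL t)
    have h2 := ((hFgrad (pk k) (hpkPi k) (L t)).hasFDerivAt).comp_hasDerivAt t (hL t)
    have h3 := h1.sub h2
    simpa [hg'def, Function.comp_def, InnerProductSpace.toDual_apply_apply,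
      inner_sub_left, hgdef, _root_.Pi.sub_def] using h3
  obtain ⟨ξ, hξ, hslope⟩ := exists_hasDerivAt_eq_slope g g' one_pos
    (fun t _ => (hg t).continuousAt.continuousWithinAt) (fun t _ => hg t)
  have hg1 : g 1 = F (xk k) p₀ - F (xk k) (pk k) := by
    simp [hgdef, hLdef, hvdef]
  have hg0 : g 0 = F xstar p₀ - F xstar (pk k) := by
    simp [hgdef, hLdef]
  have hLξV : L ξ ∈ V := by
    apply hball
    rw [Metric.mem_ball, dist_eq_norm]
    have : L ξ - xstar = ξ • v := by simp [hLdef]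
    rw [this, norm_smul]
    calc ‖ξ‖ * ‖v‖ ≤ 1 * ‖v‖ := by
          apply mul_le_mul_of_nonneg_right _ (norm_nonneg v)
          rw [Real.norm_eq_abs, abs_of_pos hξ.1]
          exact hξ.2.le
      _ < r := by rwa [one_mul]
  have hlipb : ‖gF (L ξ) p₀ - gF (L ξ) (pk k)‖ ≤ ν * ‖p₀ - pk k‖ :=
    hlipW (L ξ) hLξV p₀ ⟨mem_of_mem_nhds hW, hp₀⟩ (pk k) ⟨hBk, hpkPi k⟩
  have hinner : g' ξ ≤ ν * ‖pk k - p₀‖ * d := by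
    calc g' ξ ≤ ‖gF (L ξ) p₀ - gF (L ξ) (pk k)‖ * ‖v‖ :=
          real_inner_le_norm _ _
      _ ≤ (ν * ‖p₀ - pk k‖) * d :=
          mul_le_mul_of_nonneg_right hlipb (norm_nonneg v)
      _ = ν * ‖pk k - p₀‖ * d := by rw [norm_sub_rev]
  have hmain : κ * d ^ 2 ≤ ν * ‖pk k - p₀‖ * d := by
    have heq : g' ξ = g 1 - g 0 := by
      rw [hslope]; ring_nf
    calc κ * d ^ 2 ≤ (F (xk k) p₀ - F (xk k) (pk k)) -
          (F xstar p₀ - F xstar (pk k)) := hkey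
      _ = g 1 - g 0 := by rw [hg1, hg0]
      _ = g' ξ := heq.symm
      _ ≤ ν * ‖pk k - p₀‖ * d := hinner
  have hdest : d ≤ ν / κ * ‖pk k - p₀‖ := by
    rcases eq_or_lt_of_le (norm_nonneg v) with hd0 | hdpos
    · rw [hddef, ← hd0]
      positivity
    · have hκd : κ * d ≤ ν * ‖pk k - p₀‖ := by
        have h2 : κ * d * d ≤ ν * ‖pk k - p₀‖ * d := by nlinarith
        exact le_of_mul_le_mul_right h2 hdpos
      rw [div_mul_eq_mul_div, le_div_iff₀ hκ]
      linarith [mul_comm d κ]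
  constructor
  · exact hdest
  · refine le_trans ?_ hdest
    have hmem : xk k ∈ {x | ∀ z, compObj F R x (pk k) ≤ compObj F R z (pk k)} :=
      hxkmin k
    calc Metric.infDist xstar _ ≤ dist xstar (xk k) :=
          Metric.infDist_le_dist_of_mem hmem
      _ = d := by rw [dist_eq_norm, norm_sub_rev]

end
end
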